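/- arXiv:1609.04939 — 6 statements merged into one kernel-verified Lean document; each statement's English description precedes it below -/
import Mathlib

section
/- Let s : (0,b) → ℝ be a differentiable solution of the scalar Riccati inequality s' + s² + κ ≤ 0, and let s_κ : (0,b_κ) → ℝ be the maximally extended solution of s_κ' + s_κ² + κ = 0 with the same behavior near 0, i.e. lim_{t→0⁺}(s_κ(t) − s(t)) exists and is nonnegative. Then b ≤ b_κ and s(t) ≤ s_κ(t) for all t ∈ (0, b). -/
open Real Set Filter

/-- The maximally extended solution of `s' + s² + κ = 0` blowing up at `0⁺`. -/
noncomputable def skappa (κ : ℝ) (t : ℝ) : ℝ :=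
  if 0 < κ then Real.sqrt κ * Real.cos (Real.sqrt κ * t) / Real.sin (Real.sqrt κ * t)
  else if κ = 0 then 1 / t
  else Real.sqrt (-κ) * Real.cosh (Real.sqrt (-κ) * t) / Real.sinh (Real.sqrt (-κ) * t)

/-- The right endpoint of the maximal interval of existence `(0, b_κ)` of `skappa κ`. -/
noncomputable def bkappa (κ : ℝ) : EReal :=
  if 0 < κ then ((π / Real.sqrt κ : ℝ) : EReal) else ⊤

/-! The generalized sine `snkappa κ` has derivative the generalized cosine `cskappa κ`, and
`skappa κ = cskappa κ / snkappa κ`. For a solution `s` of the Riccati inequality the weighted gap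
`D = (skappa κ - s) · snkappa κ ² = snkappa κ · (cskappa κ - s · snkappa κ)` satisfies the
Picone-type identity `D' = (cskappa κ - s · snkappa κ)² - (s' + s² + κ) · snkappa κ ² ≥ 0`.
So `D` is nondecreasing on `(0, b)` and tends to `L · 0 = 0` at `0⁺`, hence `D ≥ 0`, which is
`s ≤ skappa κ` wherever `snkappa κ > 0`. If `κ > 0` and `π / √κ < b`, then just left of `π / √κ`
we have `snkappa κ > 0` while `cskappa κ - s · snkappa κ` is close to `cos π = -1`, so `D < 0`. -/

open Topology

noncomputable def snkappa (κ t : ℝ) : ℝ :=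
  if 0 < κ then sin (√κ * t) / √κ
  else if κ = 0 then t
  else sinh (√(-κ) * t) / √(-κ)

noncomputable def cskappa (κ t : ℝ) : ℝ :=
  if 0 < κ then cos (√κ * t)
  else if κ = 0 then 1
  else cosh (√(-κ) * t)

theorem hasDerivAt_snkappa (κ t : ℝ) : HasDerivAt (snkappa κ) (cskappa κ t) t := by
  unfold snkappa cskappa
  split_ifs with hpos hzero
  · have ha := (sqrt_pos.2 hpos).ne'
    exact (((hasDerivAt_id' t).const_mul √κ).sin.div_const √κ).congr_deriv (by field_simp)
  · exact hasDerivAt_id t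
  · have ha : √(-κ) ≠ 0 := (sqrt_pos.2 (by grind)).ne'
    exact (((hasDerivAt_id' t).const_mul √(-κ)).sinh.div_const √(-κ)).congr_deriv (by field_simp)

theorem hasDerivAt_cskappa (κ t : ℝ) : HasDerivAt (cskappa κ) (-κ * snkappa κ t) t := by
  unfold snkappa cskappa
  split_ifs with hpos hzero
  · have ha := (sqrt_pos.2 hpos).ne'
    refine ((hasDerivAt_id' t).const_mul √κ).cos.congr_deriv ?_
    field_simp
    rw [sq_sqrt hpos.le]; ring
  · simpa [hzero] using hasDerivAt_const t (1 : ℝ)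
  · have hneg : 0 < -κ := by grind
    have ha := (sqrt_pos.2 hneg).ne'
    refine ((hasDerivAt_id' t).const_mul √(-κ)).cosh.congr_deriv ?_
    field_simp
    rw [sq_sqrt hneg.le]; ring

theorem skappa_eq_div (κ t : ℝ) : skappa κ t = cskappa κ t / snkappa κ t := by
  unfold skappa snkappa cskappa
  split_ifs <;> field_simp

theorem coe_lt_bkappa_iff {κ t : ℝ} : (t : EReal) < bkappa κ ↔ (0 < κ → t < π / √κ) := by
  unfold bkappa
  split_ifs with hκ <;> simp [hκ]

theorem snkappa_pos {κ t : ℝ} (ht : 0 < t) (htb : (t : EReal) < bkappa κ) : 0 < snkappa κ t := by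
  rw [coe_lt_bkappa_iff] at htb
  unfold snkappa
  split_ifs with hpos hzero
  · have ha := sqrt_pos.2 hpos
    refine div_pos (sin_pos_of_pos_of_lt_pi (by positivity) ?_) ha
    have := htb hpos
    rwa [lt_div_iff₀ ha, mul_comm] at this
  · exact ht
  · have ha : 0 < √(-κ) := sqrt_pos.2 (by grind)
    exact div_pos (sinh_pos_iff.2 (by positivity)) ha

theorem snkappa_zero (κ : ℝ) : snkappa κ 0 = 0 := by
  simp [snkappa]

noncomputable def weightedGap (κ : ℝ) (s : ℝ → ℝ) (t : ℝ) : ℝ :=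
  (skappa κ t - s t) * snkappa κ t ^ 2

theorem weightedGap_eq (κ : ℝ) (s : ℝ → ℝ) (t : ℝ) :
    weightedGap κ s t = snkappa κ t * (cskappa κ t - s t * snkappa κ t) := by
  rw [weightedGap, skappa_eq_div]
  rcases eq_or_ne (snkappa κ t) 0 with h | h
  · simp [h]
  · field_simp

theorem hasDerivAt_weightedGap {κ t s' : ℝ} {s : ℝ → ℝ} (hs : HasDerivAt s s' t) :
    HasDerivAt (weightedGap κ s)
      ((cskappa κ t - s t * snkappa κ t) ^ 2 - (s' + s t ^ 2 + κ) * snkappa κ t ^ 2) t := by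
  rw [show weightedGap κ s = fun u ↦ snkappa κ u * (cskappa κ u - s u * snkappa κ u) from
    funext (weightedGap_eq κ s)]
  have hsn := hasDerivAt_snkappa κ t
  exact (hsn.mul ((hasDerivAt_cskappa κ t).sub (hs.mul hsn))).congr_deriv
    (by simp only [Pi.sub_apply, Pi.mul_apply]; ring)

theorem monotoneOn_weightedGap {κ a b : ℝ} {s : ℝ → ℝ}
    (hdiff : ∀ t ∈ Ioo a b, DifferentiableAt ℝ s t)
    (hineq : ∀ t ∈ Ioo a b, deriv s t + s t ^ 2 + κ ≤ 0) :
    MonotoneOn (weightedGap κ s) (Ioo a b) := by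
  have hderiv (t) (ht : t ∈ Ioo a b) := hasDerivAt_weightedGap (κ := κ) (hdiff t ht).hasDerivAt
  refine monotoneOn_of_hasDerivWithinAt_nonneg (convex_Ioo a b)
    (f' := fun t ↦
      (cskappa κ t - s t * snkappa κ t) ^ 2 - (deriv s t + s t ^ 2 + κ) * snkappa κ t ^ 2)
    (fun t ht ↦ (hderiv t ht).continuousAt.continuousWithinAt) (fun t ht ↦ ?_) (fun t ht ↦ ?_)
  all_goals rw [interior_Ioo] at ht
  · exact (hderiv t ht).hasDerivWithinAt
  · nlinarith [hineq t ht, sq_nonneg (cskappa κ t - s t * snkappa κ t),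
      sq_nonneg (snkappa κ t)]

theorem tendsto_weightedGap_nhdsGT_zero {κ L : ℝ} {s : ℝ → ℝ}
    (hlim : Tendsto (fun t ↦ skappa κ t - s t) (𝓝[>] 0) (𝓝 L)) :
    Tendsto (weightedGap κ s) (𝓝[>] 0) (𝓝 0) := by
  have hsn : ContinuousAt (fun t ↦ snkappa κ t ^ 2) 0 :=
    (hasDerivAt_snkappa κ 0).continuousAt.pow 2
  have h := hlim.mul (hsn.tendsto.mono_left (nhdsWithin_le_nhds (s := Ioi 0)))
  rwa [snkappa_zero, zero_pow two_ne_zero, mul_zero] at h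

theorem MonotoneOn.le_of_tendsto_nhdsGT {f : ℝ → ℝ} {a b l t : ℝ}
    (hf : MonotoneOn f (Ioo a b)) (hl : Tendsto f (𝓝[>] a) (𝓝 l)) (ht : t ∈ Ioo a b) :
    l ≤ f t :=
  have := nhdsGT_neBot_of_exists_gt ⟨t, ht.1⟩
  le_of_tendsto hl <| by
    filter_upwards [Ioo_mem_nhdsGT ht.1] with u hu
    exact hf ⟨hu.1, hu.2.trans ht.2⟩ ht hu.2.le

theorem coe_le_bkappa_of_weightedGap_nonneg {κ b : ℝ} {s : ℝ → ℝ}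
    (hs : ∀ t ∈ Ioo 0 b, ContinuousAt s t) (hgap : ∀ t ∈ Ioo 0 b, 0 ≤ weightedGap κ s t) :
    (b : EReal) ≤ bkappa κ := by
  by_contra! hbκ
  have hκ : 0 < κ := by
    by_contra hκ
    simp [bkappa, hκ] at hbκ
  set c := π / √κ
  have hc : 0 < c := by positivity
  have hcb : c < b := by simpa [bkappa, hκ] using hbκ
  have hcont : ContinuousAt (fun t ↦ cskappa κ t - s t * snkappa κ t) c :=
    (hasDerivAt_cskappa κ c).continuousAt.sub
      ((hs c ⟨hc, hcb⟩).mul (hasDerivAt_snkappa κ c).continuousAt)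
  have hneg : cskappa κ c - s c * snkappa κ c < 0 := by
    simp [cskappa, snkappa, hκ, c, mul_div_cancel₀ π (sqrt_pos.2 hκ).ne']
  obtain ⟨t, hneg_t, ht⟩ := ((hcont.tendsto.mono_left nhdsWithin_le_nhds).eventually
    (gt_mem_nhds hneg) |>.and (Ioo_mem_nhdsLT hc)).exists (f := 𝓝[<] c)
  have hsn := snkappa_pos ht.1 (coe_lt_bkappa_iff.2 fun _ ↦ ht.2)
  have hgap_t := hgap t ⟨ht.1, ht.2.trans hcb⟩
  rw [weightedGap_eq] at hgap_t
  exact hgap_t.not_gt (mul_neg_of_pos_of_neg hsn hneg_t)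

theorem riccati_scalar_comparison_general
    (κ b : ℝ) (s : ℝ → ℝ)
    (hdiff : ∀ t ∈ Set.Ioo 0 b, DifferentiableAt ℝ s t)
    (hineq : ∀ t ∈ Set.Ioo 0 b, deriv s t + (s t) ^ 2 + κ ≤ 0)
    (L : ℝ)
    (hlim : Filter.Tendsto (fun t => skappa κ t - s t) (nhdsWithin 0 (Set.Ioi 0)) (nhds L)) :
    (b : EReal) ≤ bkappa κ ∧ ∀ t ∈ Set.Ioo 0 b, s t ≤ skappa κ t := by
  have hgap (t) (ht : t ∈ Ioo 0 b) : 0 ≤ weightedGap κ s t :=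
    (monotoneOn_weightedGap hdiff hineq).le_of_tendsto_nhdsGT
      (tendsto_weightedGap_nhdsGT_zero hlim) ht
  have hb : (b : EReal) ≤ bkappa κ :=
    coe_le_bkappa_of_weightedGap_nonneg (fun t ht ↦ (hdiff t ht).continuousAt) hgap
  refine ⟨hb, fun t ht ↦ ?_⟩
  have hsn := snkappa_pos ht.1 ((EReal.coe_lt_coe_iff.2 ht.2).trans_le hb)
  exact sub_nonneg.1 (nonneg_of_mul_nonneg_left (hgap t ht) (pow_pos hsn 2))

theorem riccati_scalar_comparison
    (κ b : ℝ) (hb : 0 < b) (s : ℝ → ℝ)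
    (hdiff : ∀ t ∈ Set.Ioo 0 b, DifferentiableAt ℝ s t)
    (hineq : ∀ t ∈ Set.Ioo 0 b, deriv s t + (s t) ^ 2 + κ ≤ 0)
    (L : ℝ) (hL : 0 ≤ L)
    (hlim : Filter.Tendsto (fun t => skappa κ t - s t) (nhdsWithin 0 (Set.Ioi 0)) (nhds L)) :
    (b : EReal) ≤ bkappa κ ∧ ∀ t ∈ Set.Ioo 0 b, s t ≤ skappa κ t :=
  riccati_scalar_comparison_general κ b s hdiff hineq L hlim
end

section
/- Scalar Riccati comparison with equality rigidity: let s, s_κ : (0,b) → ℝ be differentiable with s' + s² + κ ≤ 0, s_κ' + s_κ² + κ = 0, and suppose lim_{t→0⁺}(s_κ(t) − s(t)) exists and is nonnegative. If s(t₀) = s_κ(t₀) for some t₀ ∈ (0,b), then s(t) = s_κ(t) for all t ∈ (0, t₀]. -/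
open Real Set Filter

lemma ricc_lower (κ b c M : ℝ) (f : ℝ → ℝ)
    (hf : ∀ t ∈ Set.Ioo 0 b, DifferentiableAt ℝ f t)
    (hineq : ∀ t ∈ Set.Ioo 0 b, deriv f t + (f t) ^ 2 + κ ≤ 0)
    (hc : c ∈ Set.Ioo 0 b)
    (hM0 : 0 < M) (hMκ : 2 * |κ| ≤ M ^ 2) (hMb : 4 / (b - c) ≤ M) :
    ∀ x ∈ Set.Ioc 0 c, -M < f x := by
  rintro x₀ ⟨hx0, hxc⟩
  by_contra hcon
  push_neg at hcon
  have hcon : f x₀ ≤ -M := hcon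
  obtain ⟨hc0, hcb⟩ := hc
  set b' : ℝ := (b + c) / 2 with hb'def
  have hcb' : c < b' := by simp only [hb'def]; linarith
  have hb'b : b' < b := by simp only [hb'def]; linarith
  have hbc4 : 4 ≤ M * (b - c) := by
    rw [div_le_iff₀ (by linarith)] at hMb; linarith
  have hinvM : 1 / M ≤ (b - c) / 4 := by
    rw [div_le_div_iff₀ hM0 (by norm_num : (0:ℝ) < 4)]; linarith
  set A : Set ℝ := {t | t ∈ Set.Icc x₀ b' ∧ ∀ r ∈ Set.Icc x₀ t, f r ≤ -M} with hAdef
  have hx₀A : x₀ ∈ A := by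
    refine ⟨⟨le_refl _, le_of_lt (lt_of_le_of_lt hxc hcb')⟩, ?_⟩
    rintro r ⟨h1, h2⟩
    have : r = x₀ := le_antisymm h2 h1
    rw [this]; exact hcon
  have hAne : A.Nonempty := ⟨x₀, hx₀A⟩
  have hbdd : BddAbove A := ⟨b', fun t ht => ht.1.2⟩
  set T : ℝ := sSup A with hTdef
  have hx₀T : x₀ ≤ T := le_csSup hbdd hx₀A
  have hTb' : T ≤ b' := csSup_le hAne (fun t ht => ht.1.2)
  have hsub : Set.Icc x₀ T ⊆ Set.Ioo 0 b := fun r hr =>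
    ⟨lt_of_lt_of_le hx0 hr.1, lt_of_le_of_lt (hr.2.trans hTb') hb'b⟩
  have hTIoo : T ∈ Set.Ioo 0 b := hsub ⟨hx₀T, le_refl T⟩
  -- f ≤ -M strictly below T
  have hlt_case : ∀ r ∈ Set.Ico x₀ T, f r ≤ -M := by
    rintro r ⟨hr1, hr2⟩
    obtain ⟨t, htA, hrt⟩ := exists_lt_of_lt_csSup hAne hr2
    exact htA.2 r ⟨hr1, hrt.le⟩
  have hfle : ∀ r ∈ Set.Icc x₀ T, f r ≤ -M := by
    rintro r ⟨hr1, hr2⟩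
    rcases lt_or_eq_of_le hr2 with hlt | heq
    · exact hlt_case r ⟨hr1, hlt⟩
    · rcases lt_or_eq_of_le hr1 with hlt | heq2
      · have hcontT : ContinuousAt f r := (hf r (hsub ⟨hr1, hr2⟩)).continuousAt
        have htend : Filter.Tendsto f (nhdsWithin r (Set.Iio r)) (nhds (f r)) :=
          hcontT.continuousWithinAt
        refine le_of_tendsto htend ?_
        filter_upwards [Ioo_mem_nhdsLT_of_mem (⟨hlt, le_refl r⟩ : r ∈ Set.Ioc x₀ r)] with a ha
        exact hlt_case a ⟨ha.1.le, heq ▸ ha.2⟩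
      · rw [← heq2]; exact hcon
  have hfT : f T ≤ -M := hfle T ⟨hx₀T, le_refl T⟩
  -- key quantitative bound: T < b'
  have hkey : ∀ t ∈ Set.Icc x₀ T, HasDerivAt (fun t => -(f t)⁻¹ + t / 2)
      (-(-(deriv f t) / (f t) ^ 2) + 1 / 2) t := by
    intro t ht
    have htI := hsub ht
    have hne : f t ≠ 0 := by have := hfle t ht; intro h; rw [h] at this; linarith
    exact (((hf t htI).hasDerivAt.inv hne).neg).add ((hasDerivAt_id t).div_const 2)
  have hderiv_nonpos : ∀ t ∈ Set.Ioo x₀ T, deriv (fun t => -(f t)⁻¹ + t / 2) t ≤ 0 := by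
    intro t ht
    have ht' : t ∈ Set.Icc x₀ T := ⟨ht.1.le, ht.2.le⟩
    have htI := hsub ht'
    rw [(hkey t ht').deriv]
    have hft : f t ≤ -M := hfle t ht'
    have hsq : M ^ 2 ≤ (f t) ^ 2 := by nlinarith
    have hpos : 0 < (f t) ^ 2 := by nlinarith
    have hdf : deriv f t ≤ -(f t) ^ 2 - κ := by have := hineq t htI; linarith
    have h1 : -(-(deriv f t) / (f t) ^ 2) + 1 / 2 = deriv f t / (f t) ^ 2 + 1 / 2 := by
      ring
    rw [h1]
    have h2 : deriv f t / (f t) ^ 2 ≤ -1 / 2 := by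
      rw [div_le_div_iff₀ hpos (by norm_num : (0:ℝ) < 2)]
      have hκ : -|κ| ≤ κ := neg_abs_le κ
      nlinarith
    linarith
  have hhmono : -(f T)⁻¹ + T / 2 ≤ -(f x₀)⁻¹ + x₀ / 2 := by
    rcases lt_or_eq_of_le hx₀T with hlt | heq
    · have hanti : AntitoneOn (fun t => -(f t)⁻¹ + t / 2) (Set.Icc x₀ T) := by
        apply antitoneOn_of_deriv_nonpos (convex_Icc x₀ T)
        · intro t ht
          exact ((hkey t ht).continuousAt).continuousWithinAt
        · intro t ht
          rw [interior_Icc] at ht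
          exact (hkey t ⟨ht.1.le, ht.2.le⟩).differentiableAt.differentiableWithinAt
        · intro t ht
          rw [interior_Icc] at ht
          exact hderiv_nonpos t ht
      exact hanti ⟨le_refl _, hx₀T⟩ ⟨hx₀T, le_refl _⟩ hx₀T
    · rw [heq]
  have hfTneg : f T < 0 := by linarith
  have hinvT : 0 < -(f T)⁻¹ := by
    have : (f T)⁻¹ < 0 := inv_lt_zero.mpr hfTneg
    linarith
  have hinvx₀ : -(f x₀)⁻¹ ≤ 1 / M := by
    have h1 : M ≤ -(f x₀) := by linarith
    have h2 : (-(f x₀))⁻¹ ≤ M⁻¹ := inv_anti₀ hM0 h1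
    rw [inv_neg] at h2
    rw [one_div]; linarith
  have hTlt : T < b' := by
    have : T / 2 < 1 / M + x₀ / 2 := by linarith
    have hx₀c : x₀ ≤ c := hxc
    simp only [hb'def]
    linarith
  -- extension: f decreasing just past T
  have hderT : deriv f T < 0 := by
    have := hineq T hTIoo
    have hsq : M ^ 2 ≤ (f T) ^ 2 := by nlinarith
    have hκ : -|κ| ≤ κ := neg_abs_le κ
    nlinarith
  have hslope : Filter.Tendsto (slope f T) (nhdsWithin T (Set.Ioi T)) (nhds (deriv f T)) := by
    have h1 := hasDerivAt_iff_tendsto_slope.mp (hf T hTIoo).hasDerivAt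
    exact h1.mono_left (nhdsWithin_mono T (fun x hx => ne_of_gt hx))
  have hev : ∀ᶠ t in nhdsWithin T (Set.Ioi T), slope f T t < 0 ∧ t < b' := by
    refine (hslope.eventually_lt_const hderT).and ?_
    exact eventually_nhdsWithin_of_eventually_nhds (Filter.Tendsto.eventually_lt_const hTlt tendsto_id)
  obtain ⟨u, hu, husub⟩ := mem_nhdsGT_iff_exists_Ioo_subset.mp hev
  set u' : ℝ := min u b' with hu'def
  have hTu' : T < u' := lt_min hu hTlt
  set t' : ℝ := (T + u') / 2 with ht'def
  have ht'1 : T < t' := by simp only [ht'def]; linarith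
  have ht'2 : t' < u' := by simp only [ht'def]; linarith
  have ht'A : t' ∈ A := by
    constructor
    · exact ⟨le_trans hx₀T ht'1.le, le_of_lt (lt_of_lt_of_le ht'2 (min_le_right u b'))⟩
    · rintro r ⟨hr1, hr2⟩
      rcases le_or_gt r T with hle | hgt
      · exact hfle r ⟨hr1, hle⟩
      · have hrIoo : r ∈ Set.Ioo T u := ⟨hgt, lt_of_le_of_lt hr2 (lt_of_lt_of_le ht'2 (min_le_left u b'))⟩
        have := husub hrIoo
        have hsl : (f r - f T) / (r - T) < 0 := by
          have h0 := this.1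
          rwa [slope_def_field] at h0
        have hrT : 0 < r - T := by linarith
        have : f r - f T < 0 := by
          by_contra hge
          push_neg at hge
          have := div_nonneg hge hrT.le
          linarith
        linarith
  have : t' ≤ T := le_csSup hbdd ht'A
  linarith

set_option maxHeartbeats 1000000 in
theorem riccati_scalar_rigidity
    (κ b t₀ : ℝ) (hb : 0 < b) (ht₀ : t₀ ∈ Set.Ioo 0 b)
    (s skap : ℝ → ℝ)
    (hsdiff : ∀ t ∈ Set.Ioo 0 b, DifferentiableAt ℝ s t)
    (hskdiff : ∀ t ∈ Set.Ioo 0 b, DifferentiableAt ℝ skap t)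
    (hineq : ∀ t ∈ Set.Ioo 0 b, deriv s t + (s t) ^ 2 + κ ≤ 0)
    (heqode : ∀ t ∈ Set.Ioo 0 b, deriv skap t + (skap t) ^ 2 + κ = 0)
    (L : ℝ) (hL : 0 ≤ L)
    (hlim : Filter.Tendsto (fun t => skap t - s t) (nhdsWithin 0 (Set.Ioi 0)) (nhds L))
    (hcrit : s t₀ = skap t₀) :
    ∀ t ∈ Set.Ioc 0 t₀, s t = skap t := by
  obtain ⟨ht₀0, ht₀b⟩ := ht₀
  set g : ℝ → ℝ := fun t => s t + skap t with hgdef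
  have hgcont : ContinuousOn g (Set.Ioo 0 b) := fun t ht =>
    (((hsdiff t ht).add (hskdiff t ht)).continuousAt).continuousWithinAt
  set Φ : ℝ → ℝ := fun t => ∫ r in t₀..t, g r with hΦdef
  have hΦ : ∀ t ∈ Set.Ioo 0 b, HasDerivAt Φ (g t) t := by
    intro t ht
    have huIcc : Set.uIcc t₀ t ⊆ Set.Ioo 0 b :=
      Set.ordConnected_Ioo.uIcc_subset ⟨ht₀0, ht₀b⟩ ht
    have hint : IntervalIntegrable g MeasureTheory.volume t₀ t :=
      (hgcont.mono huIcc).intervalIntegrable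
    have hmeas : StronglyMeasurableAtFilter g (nhds t) :=
      hgcont.stronglyMeasurableAtFilter isOpen_Ioo t ht
    have hcont : ContinuousAt g t := hgcont.continuousAt (isOpen_Ioo.mem_nhds ht)
    exact intervalIntegral.integral_hasDerivAt_right hint hmeas hcont
  -- F = (skap - s) * exp Φ
  set F : ℝ → ℝ := fun t => (skap t - s t) * Real.exp (Φ t) with hFdef
  have hFderiv : ∀ t ∈ Set.Ioo 0 b, HasDerivAt F
      ((deriv skap t - deriv s t) * Real.exp (Φ t)
        + (skap t - s t) * (Real.exp (Φ t) * g t)) t := by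
    intro t ht
    exact (((hskdiff t ht).hasDerivAt).sub ((hsdiff t ht).hasDerivAt)).mul ((hΦ t ht).exp)
  have hFnonneg : ∀ t ∈ Set.Ioo 0 b, 0 ≤ deriv F t := by
    intro t ht
    rw [(hFderiv t ht).deriv]
    have h1 := hineq t ht
    have h2 := heqode t ht
    have hexp : 0 < Real.exp (Φ t) := Real.exp_pos _
    have hkey : 0 ≤ (deriv skap t - deriv s t) + (skap t - s t) * g t := by
      simp only [hgdef]
      nlinarith
    nlinarith
  have hFmono : MonotoneOn F (Set.Ioo 0 b) := by
    apply monotoneOn_of_deriv_nonneg (convex_Ioo 0 b)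
    · intro t ht
      exact ((hFderiv t ht).continuousAt).continuousWithinAt
    · intro t ht
      rw [isOpen_Ioo.interior_eq] at ht
      exact (hFderiv t ht).differentiableAt.differentiableWithinAt
    · intro t ht
      rw [isOpen_Ioo.interior_eq] at ht
      exact hFnonneg t ht
  -- Step 1: skap - s ≤ 0 on (0, t₀]
  have hstep1 : ∀ t ∈ Set.Ioc 0 t₀, skap t - s t ≤ 0 := by
    rintro t ⟨ht0, htt₀⟩
    have htI : t ∈ Set.Ioo 0 b := ⟨ht0, lt_of_le_of_lt htt₀ ht₀b⟩
    have hFle : F t ≤ F t₀ := hFmono htI ⟨ht₀0, ht₀b⟩ htt₀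
    have hFt₀ : F t₀ = 0 := by simp only [hFdef, hcrit]; ring
    rw [hFt₀] at hFle
    have hexp : 0 < Real.exp (Φ t) := Real.exp_pos _
    simp only [hFdef] at hFle
    by_contra hpos
    push_neg at hpos
    have := mul_pos hpos hexp
    linarith
  -- Step 2: lower bound for s and skap
  set M : ℝ := max (Real.sqrt (2 * |κ|)) (4 / (b - t₀)) + 1 with hMdef
  have hM0 : 0 < M := by
    have := Real.sqrt_nonneg (2 * |κ|)
    have := le_max_left (Real.sqrt (2 * |κ|)) (4 / (b - t₀))
    simp only [hMdef]; linarith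
  have hMκ : 2 * |κ| ≤ M ^ 2 := by
    have h1 : Real.sqrt (2 * |κ|) ≤ M := by
      have := le_max_left (Real.sqrt (2 * |κ|)) (4 / (b - t₀))
      simp only [hMdef]; linarith
    have h2 : 0 ≤ 2 * |κ| := by positivity
    calc 2 * |κ| = Real.sqrt (2 * |κ|) ^ 2 := (Real.sq_sqrt h2).symm
      _ ≤ M ^ 2 := by nlinarith [Real.sqrt_nonneg (2 * |κ|)]
  have hMb : 4 / (b - t₀) ≤ M := by
    have := le_max_right (Real.sqrt (2 * |κ|)) (4 / (b - t₀))
    simp only [hMdef]; linarith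
  have hslb := ricc_lower κ b t₀ M s hsdiff hineq ⟨ht₀0, ht₀b⟩ hM0 hMκ hMb
  have hsklb := ricc_lower κ b t₀ M skap hskdiff
    (fun t ht => le_of_eq (heqode t ht)) ⟨ht₀0, ht₀b⟩ hM0 hMκ hMb
  -- H = (skap - s) * exp (-(2M) t)
  set H : ℝ → ℝ := fun t => (skap t - s t) * Real.exp (-(2 * M) * t) with hHdef
  have hHderiv : ∀ t ∈ Set.Ioo 0 b, HasDerivAt H
      ((deriv skap t - deriv s t) * Real.exp (-(2 * M) * t)
        + (skap t - s t) * (Real.exp (-(2 * M) * t) * -(2 * M))) t := by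
    intro t ht
    have he : HasDerivAt (fun t : ℝ => Real.exp (-(2 * M) * t))
        (Real.exp (-(2 * M) * t) * -(2 * M)) t := by
      have := ((hasDerivAt_id t).const_mul (-(2 * M))).exp
      simpa using this
    exact (((hskdiff t ht).hasDerivAt).sub ((hsdiff t ht).hasDerivAt)).mul he
  have hHnonneg : ∀ t ∈ Set.Ioo 0 t₀, 0 ≤ deriv H t := by
    intro t ht
    have htI : t ∈ Set.Ioo 0 b := ⟨ht.1, lt_trans ht.2 ht₀b⟩
    rw [(hHderiv t htI).deriv]
    have h1 := hineq t htI
    have h2 := heqode t htI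
    have hu : skap t - s t ≤ 0 := hstep1 t ⟨ht.1, ht.2.le⟩
    have hls : -M < s t := hslb t ⟨ht.1, ht.2.le⟩
    have hlk : -M < skap t := hsklb t ⟨ht.1, ht.2.le⟩
    have hexp : 0 < Real.exp (-(2 * M) * t) := Real.exp_pos _
    -- (skap' - s') ≥ (s+skap)(s - skap) ≥ -2M (s - skap) ; so skap'-s' - 2M(skap-s) ≥ 0? check:
    have hprod : -(2 * M) * (s t - skap t) ≤ (s t + skap t) * (s t - skap t) :=
      mul_le_mul_of_nonneg_right (by linarith) (by linarith)
    have hex2 : (s t + skap t) * (s t - skap t) = (s t) ^ 2 - (skap t) ^ 2 := by ring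
    have hderi : (s t + skap t) * (s t - skap t) ≤ deriv skap t - deriv s t := by
      rw [hex2]; linarith
    have hid : (skap t - s t) * -(2 * M) = -(-(2 * M) * (s t - skap t)) := by ring
    have hkey : 0 ≤ (deriv skap t - deriv s t) + (skap t - s t) * -(2 * M) := by
      rw [hid]; linarith
    nlinarith [mul_nonneg hexp.le hkey]
  have hHmono : MonotoneOn H (Set.Ioc 0 t₀) := by
    apply monotoneOn_of_deriv_nonneg (convex_Ioc 0 t₀)
    · intro t ht
      have htI : t ∈ Set.Ioo 0 b := ⟨ht.1, lt_of_le_of_lt ht.2 ht₀b⟩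
      exact ((hHderiv t htI).continuousAt).continuousWithinAt
    · intro t ht
      rw [interior_Ioc] at ht
      have htI : t ∈ Set.Ioo 0 b := ⟨ht.1, lt_trans ht.2 ht₀b⟩
      exact (hHderiv t htI).differentiableAt.differentiableWithinAt
    · intro t ht
      rw [interior_Ioc] at ht
      exact hHnonneg t ht
  -- H tends to L at 0+
  have hHlim : Filter.Tendsto H (nhdsWithin 0 (Set.Ioi 0)) (nhds L) := by
    have he : Filter.Tendsto (fun t : ℝ => Real.exp (-(2 * M) * t))
        (nhdsWithin 0 (Set.Ioi 0)) (nhds 1) := by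
      have hc : Continuous (fun t : ℝ => Real.exp (-(2 * M) * t)) := by continuity
      have := (hc.tendsto 0).mono_left (nhdsWithin_le_nhds (s := Set.Ioi (0:ℝ)))
      simpa using this
    simpa only [mul_one] using hlim.mul he
  -- conclude
  rintro t ⟨ht0, htt₀⟩
  have hle : skap t - s t ≤ 0 := hstep1 t ⟨ht0, htt₀⟩
  have hge : 0 ≤ skap t - s t := by
    have hLH : L ≤ H t := by
      apply le_of_tendsto hHlim
      filter_upwards [Ioo_mem_nhdsGT_of_mem (⟨le_refl _, ht0⟩ : (0:ℝ) ∈ Set.Ico 0 t)] with a ha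
      exact hHmono ⟨ha.1, le_trans ha.2.le htt₀⟩ ⟨ht0, htt₀⟩ ha.2.le
    have hexp : 0 < Real.exp (-(2 * M) * t) := Real.exp_pos _
    have hHt : 0 ≤ H t := le_trans hL hLH
    simp only [hHdef] at hHt
    by_contra hneg
    push_neg at hneg
    have := mul_neg_of_neg_of_pos hneg hexp
    linarith
  linarith
end

section
/- Let R : ℝ → S(E) be a smooth curve of self-adjoint operators on an n-dimensional real inner product space E with tr R(t) ≥ nκ for all t, and let S : (0,b) → S(E) be a solution of S' + S² + R = 0. Let s_κ : (0,b_κ) → ℝ solve s_κ' + s_κ² + κ = 0 and be non-extendible beyond b_κ. If lim_{t→0⁺}(s_κ(t) − (1/n)·tr S(t)) exists and is nonnegative, then b ≤ b_κ and tr S(t) ≤ n·s_κ(t) for all t ∈ (0,b). -/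
open Real Set Filter Topology intervalIntegral


lemma trace_sq_le {E : Type*} [NormedAddCommGroup E] [InnerProductSpace ℝ E]
    [FiniteDimensional ℝ E] (A : E →ₗ[ℝ] E) (hA : A.IsSymmetric) :
    (LinearMap.trace ℝ E A)^2 ≤ (Module.finrank ℝ E : ℝ) * LinearMap.trace ℝ E (A * A) := by
  set b := stdOrthonormalBasis ℝ E
  set M := LinearMap.toMatrix b.toBasis b.toBasis A with hM
  have hsymm : ∀ i j, M i j = M j i := by
    intro i j
    simp only [hM, LinearMap.toMatrix_apply, OrthonormalBasis.coe_toBasis,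
      OrthonormalBasis.coe_toBasis_repr_apply, b.repr_apply_apply]
    rw [real_inner_comm, hA]
  have h1 : LinearMap.trace ℝ E A = Matrix.trace M := by
    rw [LinearMap.trace_eq_matrix_trace ℝ b.toBasis]
  have h2 : LinearMap.trace ℝ E (A * A) = Matrix.trace (M * M) := by
    rw [LinearMap.trace_eq_matrix_trace ℝ b.toBasis, LinearMap.toMatrix_mul]
  rw [h1, h2]
  have h3 : ∑ i, (M i i)^2 ≤ Matrix.trace (M * M) := by
    rw [Matrix.trace]
    apply Finset.sum_le_sum
    intro i _
    rw [Matrix.diag_apply, Matrix.mul_apply]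
    calc (M i i)^2 = ∑ j ∈ {i}, (M i j)*(M j i) := by simp [sq]
    _ ≤ ∑ j, M i j * M j i := by
        apply Finset.sum_le_sum_of_subset_of_nonneg (Finset.subset_univ _)
        intro j _ _
        rw [hsymm i j]; exact mul_self_nonneg _
  calc (Matrix.trace M)^2 ≤ (Module.finrank ℝ E : ℝ) * ∑ i, (M i i)^2 := by
        have := sq_sum_le_card_mul_sum_sq (s := (Finset.univ : Finset (Fin (Module.finrank ℝ E)))) (f := fun i => M i i)
        simpa [Matrix.trace, Matrix.diag] using this
  _ ≤ _ := by
      apply mul_le_mul_of_nonneg_left h3 (by positivity)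
lemma skappa_hasDerivAt (κ t : ℝ) (ht : 0 < t) (htκ : 0 < κ → t < π / Real.sqrt κ) :
    HasDerivAt (skappa κ) (-(skappa κ t)^2 - κ) t := by
  rcases lt_trichotomy 0 κ with hκ | hκ | hκ
  · -- κ > 0
    set c := Real.sqrt κ with hc
    have hc0 : 0 < c := Real.sqrt_pos.mpr hκ
    have hcsq : c^2 = κ := Real.sq_sqrt hκ.le
    have hct : 0 < c * t := mul_pos hc0 ht
    have hctπ : c * t < π := by
      have := htκ hκ
      calc c * t < c * (π / c) := by exact mul_lt_mul_of_pos_left this hc0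
      _ = π := by field_simp
    have hs : 0 < Real.sin (c * t) := Real.sin_pos_of_pos_of_lt_pi hct hctπ
    have hs' : Real.sin (c * t) ≠ 0 := ne_of_gt hs
    have hid : HasDerivAt (fun x : ℝ => c * x) c t := by
      simpa using (hasDerivAt_id t).const_mul c
    have h1 : HasDerivAt (fun x => c * Real.cos (c * x)) (c * (-Real.sin (c*t) * c)) t := by
      exact (((Real.hasDerivAt_cos (c*t)).comp t hid)).const_mul c
    have h2 : HasDerivAt (fun x => Real.sin (c * x)) (Real.cos (c*t) * c) t :=
      (Real.hasDerivAt_sin (c*t)).comp t hid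
    have h3 : HasDerivAt (fun x => c * Real.cos (c * x) / Real.sin (c * x)) _ t := h1.div h2 hs'
    have heq : (fun x => c * Real.cos (c * x) / Real.sin (c * x)) = skappa κ := by
      funext x; simp [skappa, hκ, hc]
    rw [heq] at h3
    convert h3 using 1
    have hval : skappa κ t = c * Real.cos (c*t) / Real.sin (c*t) := by simp [skappa, hκ, hc]
    rw [hval]
    have hpyth := Real.sin_sq_add_cos_sq (c*t)
    field_simp
    nlinarith [hpyth, sq_nonneg (Real.sin (c*t))]
  · -- κ = 0
    have heq : (fun x : ℝ => 1 / x) = skappa κ := by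
      funext x; simp [skappa, hκ.symm, ← hκ]
    have h3 : HasDerivAt (fun x : ℝ => 1 / x) (-(1/t)^2 - κ) t := by
      have := (hasDerivAt_id t).div (hasDerivAt_id t |>.const_mul (1:ℝ)) (by simp; exact ne_of_gt ht)
      simpa [← hκ] using (hasDerivAt_inv (ne_of_gt ht)).congr_deriv (by
        field_simp)
    rw [heq] at h3
    convert h3 using 1
    simp [skappa, ← hκ]
  · -- κ < 0
    set c := Real.sqrt (-κ) with hc
    have hc0 : 0 < c := Real.sqrt_pos.mpr (by linarith)
    have hcsq : c^2 = -κ := Real.sq_sqrt (by linarith)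
    have hct : 0 < c * t := mul_pos hc0 ht
    have hs : 0 < Real.sinh (c * t) := Real.sinh_pos_iff.mpr hct
    have hs' : Real.sinh (c * t) ≠ 0 := ne_of_gt hs
    have hid : HasDerivAt (fun x : ℝ => c * x) c t := by
      simpa using (hasDerivAt_id t).const_mul c
    have h1 : HasDerivAt (fun x => c * Real.cosh (c * x)) (c * (Real.sinh (c*t) * c)) t :=
      (((Real.hasDerivAt_cosh (c*t)).comp t hid)).const_mul c
    have h2 : HasDerivAt (fun x => Real.sinh (c * x)) (Real.cosh (c*t) * c) t :=
      (Real.hasDerivAt_sinh (c*t)).comp t hid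
    have h3 : HasDerivAt (fun x => c * Real.cosh (c * x) / Real.sinh (c * x)) _ t := h1.div h2 hs'
    have heq : (fun x => c * Real.cosh (c * x) / Real.sinh (c * x)) = skappa κ := by
      funext x; simp [skappa, not_lt.mpr hκ.le, ne_of_lt hκ, hc]
    rw [heq] at h3
    convert h3 using 1
    have hval : skappa κ t = c * Real.cosh (c*t) / Real.sinh (c*t) := by
      simp [skappa, not_lt.mpr hκ.le, ne_of_lt hκ, hc]
    rw [hval]
    have hpyth := Real.cosh_sq_sub_sinh_sq (c*t)
    field_simp
    nlinarith [hpyth]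

lemma skappa_tendsto_atTop (κ : ℝ) : Tendsto (skappa κ) (𝓝[>] (0:ℝ)) atTop := by
  rcases lt_trichotomy 0 κ with hκ | hκ | hκ
  · set c := Real.sqrt κ with hc
    have hc0 : 0 < c := Real.sqrt_pos.mpr hκ
    have hπ : 0 < π / c := div_pos Real.pi_pos hc0
    have hnum : Tendsto (fun t => c * Real.cos (c * t)) (𝓝[>] (0:ℝ)) (𝓝 c) := by
      have : ContinuousAt (fun t => c * Real.cos (c * t)) 0 := by fun_prop
      have h := this.tendsto.mono_left (nhdsWithin_le_nhds (s := Set.Ioi (0:ℝ)))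
      simpa using h
    have hden : Tendsto (fun t => Real.sin (c * t)) (𝓝[>] (0:ℝ)) (𝓝[>] (0:ℝ)) := by
      rw [tendsto_nhdsWithin_iff]
      constructor
      · have : ContinuousAt (fun t => Real.sin (c * t)) 0 := by fun_prop
        simpa using this.tendsto.mono_left (nhdsWithin_le_nhds (s := Set.Ioi (0:ℝ)))
      · filter_upwards [Ioo_mem_nhdsGT hπ] with t ht
        exact Real.sin_pos_of_pos_of_lt_pi (mul_pos hc0 ht.1)
          (by rw [mul_comm]; exact (lt_div_iff₀ hc0).mp ht.2)
    have h := Tendsto.pos_mul_atTop hc0 hnum hden.inv_tendsto_nhdsGT_zero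
    apply h.congr
    intro t; simp [skappa, hκ, div_eq_mul_inv, hc]
  · have : Tendsto (fun t : ℝ => 1 / t) (𝓝[>] (0:ℝ)) atTop := by
      simpa [one_div] using tendsto_inv_nhdsGT_zero (𝕜 := ℝ)
    apply this.congr
    intro t; simp [skappa, ← hκ]
  · set c := Real.sqrt (-κ) with hc
    have hc0 : 0 < c := Real.sqrt_pos.mpr (by linarith)
    have hnum : Tendsto (fun t => c * Real.cosh (c * t)) (𝓝[>] (0:ℝ)) (𝓝 c) := by
      have : ContinuousAt (fun t => c * Real.cosh (c * t)) 0 := by fun_prop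
      simpa using this.tendsto.mono_left (nhdsWithin_le_nhds (s := Set.Ioi (0:ℝ)))
    have hden : Tendsto (fun t => Real.sinh (c * t)) (𝓝[>] (0:ℝ)) (𝓝[>] (0:ℝ)) := by
      rw [tendsto_nhdsWithin_iff]
      constructor
      · have : ContinuousAt (fun t => Real.sinh (c * t)) 0 := by fun_prop
        simpa using this.tendsto.mono_left (nhdsWithin_le_nhds (s := Set.Ioi (0:ℝ)))
      · filter_upwards [self_mem_nhdsWithin] with t ht
        exact Real.sinh_pos_iff.mpr (mul_pos hc0 ht)
    have h := Tendsto.pos_mul_atTop hc0 hnum hden.inv_tendsto_nhdsGT_zero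
    apply h.congr
    intro t; simp [skappa, not_lt.mpr hκ.le, ne_of_lt hκ, div_eq_mul_inv, hc]

lemma skappa_tendsto_atBot (κ : ℝ) (hκ : 0 < κ) :
    Tendsto (skappa κ) (𝓝[<] (π / Real.sqrt κ)) atBot := by
  set c := Real.sqrt κ with hc
  have hc0 : 0 < c := Real.sqrt_pos.mpr hκ
  have hπ : 0 < π / c := div_pos Real.pi_pos hc0
  have hcp : c * (π / c) = π := by field_simp
  have hnum : Tendsto (fun t => -(c * Real.cos (c * t))) (𝓝[<] (π / c)) (𝓝 c) := by
    have : ContinuousAt (fun t => -(c * Real.cos (c * t))) (π / c) := by fun_prop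
    have h := this.tendsto.mono_left (nhdsWithin_le_nhds (s := Set.Iio (π / c)))
    simpa [hcp] using h
  have hden : Tendsto (fun t => Real.sin (c * t)) (𝓝[<] (π / c)) (𝓝[>] (0:ℝ)) := by
    rw [tendsto_nhdsWithin_iff]
    constructor
    · have : ContinuousAt (fun t => Real.sin (c * t)) (π / c) := by fun_prop
      simpa [hcp] using this.tendsto.mono_left (nhdsWithin_le_nhds (s := Set.Iio (π / c)))
    · filter_upwards [Ioo_mem_nhdsLT hπ] with t ht
      exact Real.sin_pos_of_pos_of_lt_pi (mul_pos hc0 ht.1)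
        (by rw [mul_comm]; exact (lt_div_iff₀ hc0).mp ht.2)
  have h := Tendsto.pos_mul_atTop hc0 hnum hden.inv_tendsto_nhdsGT_zero
  have h2 := tendsto_neg_atTop_atBot.comp h
  apply h2.congr
  intro t
  simp only [Function.comp, skappa, hκ, if_pos, div_eq_mul_inv, Pi.inv_apply]
  ring

lemma riccati_scalar_comparison_s2
    (κ m : ℝ) (hm : 0 < m)
    (σ σ' : ℝ → ℝ)
    (hσd : ∀ t ∈ Ioo (0:ℝ) m, HasDerivAt σ (σ' t) t)
    (hσle : ∀ t ∈ Ioo (0:ℝ) m, σ' t ≤ -(σ t)^2 - κ)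
    (hdom : ∀ t ∈ Ioo (0:ℝ) m, 0 < κ → t < π / Real.sqrt κ)
    (L : ℝ) (hL : 0 ≤ L)
    (hlim : Tendsto (fun t => skappa κ t - σ t) (𝓝[>] (0:ℝ)) (𝓝 L)) :
    ∀ t ∈ Ioo (0:ℝ) m, σ t ≤ skappa κ t := by
  intro t₁ ht₁
  set u : ℝ → ℝ := fun s => skappa κ s - σ s with hu
  set f : ℝ → ℝ := fun s => skappa κ s + σ s with hf
  set u' : ℝ → ℝ := fun s => (-(skappa κ s)^2 - κ) - σ' s with hu'
  have hskd : ∀ s ∈ Ioo (0:ℝ) m, HasDerivAt (skappa κ) (-(skappa κ s)^2 - κ) s :=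
    fun s hs => skappa_hasDerivAt κ s hs.1 (hdom s hs)
  have hud : ∀ s ∈ Ioo (0:ℝ) m, HasDerivAt u (u' s) s :=
    fun s hs => (hskd s hs).sub (hσd s hs)
  have hud_ge : ∀ s ∈ Ioo (0:ℝ) m, -(f s) * u s ≤ u' s := by
    intro s hs
    have h := hσle s hs
    simp only [hu', hf, hu]
    nlinarith [h]
  have hfc : ∀ s ∈ Ioo (0:ℝ) m, ContinuousAt f s := by
    intro s hs
    exact ((hskd s hs).continuousAt.add (hσd s hs).continuousAt)
  have hfco : ContinuousOn f (Ioo 0 m) := fun s hs => (hfc s hs).continuousWithinAt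
  -- f tends to atTop at 0⁺
  have hσtop : Tendsto σ (𝓝[>] (0:ℝ)) atTop := by
    have hle : ∀ᶠ s in 𝓝[>] (0:ℝ), -(L+1) ≤ -(u s) := by
      filter_upwards [hlim.eventually (eventually_lt_nhds (by linarith : L < L + 1))] with s hs
      simp only [neg_le_neg_iff]; exact hs.le
    have := tendsto_atTop_add_right_of_le' (l := 𝓝[>] (0:ℝ)) (f := skappa κ)
      (g := fun s => -(u s)) (-(L+1)) (skappa_tendsto_atTop κ) hle
    apply this.congr
    intro s; simp only [hu]; ring
  have hftop : Tendsto f (𝓝[>] (0:ℝ)) atTop := by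
    have hle : ∀ᶠ s in 𝓝[>] (0:ℝ), (0:ℝ) ≤ σ s := hσtop.eventually_ge_atTop 0
    exact tendsto_atTop_add_right_of_le' (l := 𝓝[>] (0:ℝ)) (f := skappa κ)
      (g := σ) 0 (skappa_tendsto_atTop κ) hle
  -- find δ' with f > 0 on (0, δ')
  obtain ⟨δ', hδ'pos, hδ'sub⟩ : ∃ δ' ∈ Ioi (0:ℝ), Ioo (0:ℝ) δ' ⊆ {s | 0 < f s} := by
    have : {s | 0 < f s} ∈ 𝓝[>] (0:ℝ) := hftop.eventually (eventually_gt_atTop 0)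
    exact mem_nhdsGT_iff_exists_Ioo_subset.mp this
  set δ : ℝ := min (δ'/2) t₁ with hδ
  have hδ'pos' : (0:ℝ) < δ' := hδ'pos
  have hδpos : 0 < δ := lt_min (by linarith) ht₁.1
  have hδt₁ : δ ≤ t₁ := min_le_right _ _
  have hδδ' : δ < δ' := lt_of_le_of_lt (min_le_left _ _) (by linarith)
  have hδm : δ < m := lt_of_le_of_lt hδt₁ ht₁.2
  set Mv : ℝ := ∫ x in δ..t₁, f x with hMv
  set C : ℝ := Real.exp (-Mv) with hC
  have hCpos : 0 < C := Real.exp_pos _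
  have key : ∀ ε > (0:ℝ), -(ε * C) ≤ u t₁ := by
    intro ε hε
    obtain ⟨t₀, ht₀u, ht₀mem⟩ : ∃ t₀, -ε < u t₀ ∧ t₀ ∈ Ioo (0:ℝ) δ := by
      have h1 : ∀ᶠ s in 𝓝[>] (0:ℝ), -ε < u s :=
        hlim.eventually (eventually_gt_nhds (by linarith))
      exact (h1.and (Ioo_mem_nhdsGT hδpos)).exists
    have ht₀pos : 0 < t₀ := ht₀mem.1
    have ht₀δ : t₀ < δ := ht₀mem.2
    have ht₀t₁ : t₀ ≤ t₁ := le_of_lt (lt_of_lt_of_le ht₀δ hδt₁)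
    have hsub : Icc t₀ t₁ ⊆ Ioo 0 m := fun s hs =>
      ⟨lt_of_lt_of_le ht₀pos hs.1, lt_of_le_of_lt hs.2 ht₁.2⟩
    set F : ℝ → ℝ := fun s => ∫ x in t₀..s, f x with hF
    have hFd : ∀ s ∈ Icc t₀ t₁, HasDerivAt F (f s) s := by
      intro s hs
      have hint : IntervalIntegrable f MeasureTheory.volume t₀ s := by
        apply ContinuousOn.intervalIntegrable
        apply hfco.mono
        rw [uIcc_of_le hs.1]
        exact fun x hx => hsub ⟨hx.1, le_trans hx.2 hs.2⟩
      have hmeas : StronglyMeasurableAtFilter f (𝓝 s) :=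
        hfco.stronglyMeasurableAtFilter isOpen_Ioo s (hsub hs)
      exact intervalIntegral.integral_hasDerivAt_right hint hmeas (hfc s (hsub hs))
    set g : ℝ → ℝ := fun s => u s * Real.exp (F s) with hg
    have hgd : ∀ s ∈ Icc t₀ t₁, HasDerivAt g ((u' s + f s * u s) * Real.exp (F s)) s := by
      intro s hs
      have h := (hud s (hsub hs)).mul ((hFd s hs).exp)
      exact h.congr_deriv (by ring)
    have hmono : MonotoneOn g (Icc t₀ t₁) := by
      apply monotoneOn_of_deriv_nonneg (convex_Icc t₀ t₁)
      · exact fun s hs => (hgd s hs).continuousAt.continuousWithinAt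
      · intro s hs
        rw [interior_Icc] at hs
        exact (hgd s (Ioo_subset_Icc_self hs)).differentiableAt.differentiableWithinAt
      · intro s hs
        rw [interior_Icc] at hs
        rw [(hgd s (Ioo_subset_Icc_self hs)).deriv]
        have h1 := hud_ge s (hsub (Ioo_subset_Icc_self hs))
        have h2 : 0 ≤ u' s + f s * u s := by linarith
        exact mul_nonneg h2 (Real.exp_pos _).le
    have hgle : u t₀ ≤ u t₁ * Real.exp (F t₁) := by
      have h := hmono (left_mem_Icc.mpr ht₀t₁) (right_mem_Icc.mpr ht₀t₁) ht₀t₁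
      simpa [hg, hF, intervalIntegral.integral_same] using h
    have hint1 : IntervalIntegrable f MeasureTheory.volume t₀ δ := by
      apply ContinuousOn.intervalIntegrable
      apply hfco.mono
      rw [uIcc_of_le ht₀δ.le]
      exact fun x hx => ⟨lt_of_lt_of_le ht₀pos hx.1, lt_of_le_of_lt hx.2 hδm⟩
    have hint2 : IntervalIntegrable f MeasureTheory.volume δ t₁ := by
      apply ContinuousOn.intervalIntegrable
      apply hfco.mono
      rw [uIcc_of_le hδt₁]
      exact fun x hx => ⟨lt_of_lt_of_le hδpos hx.1, lt_of_le_of_lt hx.2 ht₁.2⟩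
    have hsplit : F t₁ = (∫ x in t₀..δ, f x) + Mv :=
      (intervalIntegral.integral_add_adjacent_intervals hint1 hint2).symm
    have hpos1 : 0 ≤ ∫ x in t₀..δ, f x := by
      apply intervalIntegral.integral_nonneg ht₀δ.le
      intro x hx
      exact (hδ'sub ⟨lt_of_lt_of_le ht₀pos hx.1, lt_of_le_of_lt hx.2 hδδ'⟩).le
    have hFMv : Mv ≤ F t₁ := by rw [hsplit]; linarith
    rcases le_or_gt 0 (u t₁) with h | h
    · nlinarith
    · have h1 : Real.exp Mv ≤ Real.exp (F t₁) := Real.exp_le_exp.mpr hFMv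
      have h2 : u t₁ * Real.exp (F t₁) ≤ u t₁ * Real.exp Mv :=
        mul_le_mul_of_nonpos_left h1 h.le
      have h3 : -ε ≤ u t₁ * Real.exp Mv := le_trans (le_trans ht₀u.le hgle) h2
      have h4 : Real.exp Mv * C = 1 := by
        rw [hC, ← Real.exp_add]; simp
      nlinarith [Real.exp_pos Mv]
  have hu0 : 0 ≤ u t₁ := by
    by_contra hcon
    push_neg at hcon
    have hε : 0 < -(u t₁) / (2 * C) := div_pos (by linarith) (by linarith)
    have h := key _ hε
    have heq : -(-(u t₁) / (2 * C) * C) = u t₁ / 2 := by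
      field_simp
    rw [heq] at h
    clear_value u C Mv
    linarith
  simp only [hu] at hu0
  linarith

set_option maxHeartbeats 1000000 in
theorem riccati_operator_comparison
    {E : Type*} [NormedAddCommGroup E] [InnerProductSpace ℝ E] [FiniteDimensional ℝ E]
    (n : ℕ) (hn : 0 < n) (hdim : Module.finrank ℝ E = n)
    (κ b : ℝ) (hb : 0 < b)
    (R : ℝ → E →L[ℝ] E) (hRsmooth : ContDiff ℝ (⊤ : ℕ∞) R)
    (hRsa : ∀ t, IsSelfAdjoint (R t))
    (hRtr : ∀ t, (n : ℝ) * κ ≤ LinearMap.trace ℝ E (R t : E →ₗ[ℝ] E))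
    (S : ℝ → E →L[ℝ] E)
    (hSsa : ∀ t ∈ Set.Ioo 0 b, IsSelfAdjoint (S t))
    (hSdiff : ∀ t ∈ Set.Ioo 0 b, DifferentiableAt ℝ S t)
    (hS : ∀ t ∈ Set.Ioo 0 b, deriv S t + S t * S t + R t = 0)
    (L : ℝ) (hL : 0 ≤ L)
    (hlim : Filter.Tendsto
      (fun t => skappa κ t - (1 / (n : ℝ)) * LinearMap.trace ℝ E (S t : E →ₗ[ℝ] E))
      (nhdsWithin 0 (Set.Ioi 0)) (nhds L)) :
    (b : EReal) ≤ bkappa κ ∧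
      ∀ t ∈ Set.Ioo 0 b, LinearMap.trace ℝ E (S t : E →ₗ[ℝ] E) ≤ (n : ℝ) * skappa κ t := by
  have hn' : (0:ℝ) < (n:ℝ) := Nat.cast_pos.mpr hn
  set σ : ℝ → ℝ := fun t => (1 / (n : ℝ)) * LinearMap.trace ℝ E (S t : E →ₗ[ℝ] E) with hσ
  set σ' : ℝ → ℝ := fun t => (1 / (n : ℝ)) * LinearMap.trace ℝ E ((deriv S t : E →L[ℝ] E) : E →ₗ[ℝ] E)
    with hσ'
  -- trace as a continuous linear map
  set T : (E →L[ℝ] E) →ₗ[ℝ] ℝ := (LinearMap.trace ℝ E).comp (ContinuousLinearMap.coeLM ℝ)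
    with hT
  set Tc : (E →L[ℝ] E) →L[ℝ] ℝ := LinearMap.toContinuousLinearMap T with hTc
  have hTc_apply : ∀ A : E →L[ℝ] E, Tc A = LinearMap.trace ℝ E (A : E →ₗ[ℝ] E) := by
    intro A; rfl
  have hσd : ∀ t ∈ Ioo (0:ℝ) b, HasDerivAt σ (σ' t) t := by
    intro t ht
    have h1 : HasDerivAt S (deriv S t) t := (hSdiff t ht).hasDerivAt
    have h2 : HasDerivAt (fun s => Tc (S s)) (Tc (deriv S t)) t :=
      Tc.hasFDerivAt.comp_hasDerivAt t h1
    have h3 := h2.const_mul (1 / (n:ℝ))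
    simp only [hTc_apply] at h3
    exact h3
  have hσle : ∀ t ∈ Ioo (0:ℝ) b, σ' t ≤ -(σ t)^2 - κ := by
    intro t ht
    have hd : deriv S t = -(S t * S t + R t) := by
      have h := hS t ht
      rw [add_assoc, add_eq_zero_iff_eq_neg] at h
      exact h
    have htr : LinearMap.trace ℝ E ((deriv S t : E →L[ℝ] E) : E →ₗ[ℝ] E)
        = -(LinearMap.trace ℝ E ((S t : E →ₗ[ℝ] E) * (S t : E →ₗ[ℝ] E))
            + LinearMap.trace ℝ E (R t : E →ₗ[ℝ] E)) := by
      rw [hd]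
      rw [show ((-(S t * S t + R t) : E →L[ℝ] E) : E →ₗ[ℝ] E)
          = -((S t : E →ₗ[ℝ] E) * (S t : E →ₗ[ℝ] E) + (R t : E →ₗ[ℝ] E)) from rfl]
      rw [map_neg, map_add]
    have hsym : (S t : E →ₗ[ℝ] E).IsSymmetric :=
      ContinuousLinearMap.isSelfAdjoint_iff_isSymmetric.mp (hSsa t ht)
    have hkey := trace_sq_le (S t : E →ₗ[ℝ] E) hsym
    rw [hdim] at hkey
    have hRt := hRtr t
    show (1 / (n:ℝ)) * LinearMap.trace ℝ E ((deriv S t : E →L[ℝ] E) : E →ₗ[ℝ] E)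
        ≤ -((1 / (n:ℝ)) * LinearMap.trace ℝ E (S t : E →ₗ[ℝ] E))^2 - κ
    rw [htr]
    set x := LinearMap.trace ℝ E (S t : E →ₗ[ℝ] E) with hx
    set y := LinearMap.trace ℝ E ((S t : E →ₗ[ℝ] E) * (S t : E →ₗ[ℝ] E)) with hy
    set z := LinearMap.trace ℝ E (R t : E →ₗ[ℝ] E) with hz
    have hmain : x^2 + κ*(n:ℝ)^2 ≤ (y+z)*(n:ℝ) := by
      nlinarith [hkey, mul_le_mul_of_nonneg_right hRt hn'.le]
    have hdiff : -((1/(n:ℝ))*x)^2 - κ - (1/(n:ℝ)) * -(y+z)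
        = ((y+z)*(n:ℝ) - x^2 - κ*(n:ℝ)^2)/(n:ℝ)^2 := by
      field_simp
      ring
    have hnum : 0 ≤ ((y+z)*(n:ℝ) - x^2 - κ*(n:ℝ)^2)/(n:ℝ)^2 :=
      div_nonneg (by linarith) (by positivity)
    linarith
  -- Part 1 : b ≤ bkappa κ
  by_cases hκ : 0 < κ
  · set p : ℝ := π / Real.sqrt κ with hp
    have hppos : 0 < p := div_pos Real.pi_pos (Real.sqrt_pos.mpr hκ)
    have hbp : b ≤ p := by
      by_contra hcon
      push_neg at hcon
      have hcomp := riccati_scalar_comparison_s2 κ p hppos σ σ'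
        (fun t ht => hσd t ⟨ht.1, lt_trans ht.2 hcon⟩)
        (fun t ht => hσle t ⟨ht.1, lt_trans ht.2 hcon⟩)
        (fun t ht _ => ht.2) L hL hlim
      have hσc : ContinuousAt σ p := (hσd p ⟨hppos, hcon⟩).continuousAt
      have h1 : Tendsto σ (𝓝[<] p) (𝓝 (σ p)) :=
        hσc.tendsto.mono_left (nhdsWithin_le_nhds (s := Set.Iio p))
      have h2 := skappa_tendsto_atBot κ hκ
      have h3 : ∀ᶠ t in 𝓝[<] p, skappa κ t < σ p - 1 :=
        h2.eventually (eventually_lt_atBot _)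
      have h4 : ∀ᶠ t in 𝓝[<] p, σ p - 1 < σ t :=
        h1.eventually (eventually_gt_nhds (by linarith))
      have h5 : Ioo (0:ℝ) p ∈ 𝓝[<] p := Ioo_mem_nhdsLT hppos
      obtain ⟨t, ht3, ht4, ht5⟩ := (h3.and (h4.and h5)).exists
      have := hcomp t ht5
      linarith [ht4]
    constructor
    · rw [bkappa, if_pos hκ]
      exact_mod_cast hbp
    · intro t ht
      have hcomp := riccati_scalar_comparison_s2 κ b hb σ σ' hσd hσle
        (fun s hs _ => lt_of_lt_of_le hs.2 hbp) L hL hlim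
      have h := hcomp t ht
      simp only [hσ] at h
      rw [div_mul_eq_mul_div, one_mul, div_le_iff₀ hn'] at h
      linarith [h]
  · constructor
    · rw [bkappa, if_neg hκ]; exact le_top
    · intro t ht
      have hcomp := riccati_scalar_comparison_s2 κ b hb σ σ' hσd hσle
        (fun s hs hκ' => absurd hκ' hκ) L hL hlim
      have h := hcomp t ht
      simp only [hσ] at h
      rw [div_mul_eq_mul_div, one_mul, div_le_iff₀ hn'] at h
      linarith [h]
end

section
/- Matrix Riccati comparison rigidity: in the setting of the vector-valued Riccati comparison (S' + S² + R = 0 with tr R ≥ nκ, and tr S(t) ≤ n s_κ(t)), if tr S(t₀) = n·s_κ(t₀) for some t₀ ∈ (0,b), then for all t ∈ (0,t₀] one has S(t) = s_κ(t)·Id_E and R(t) = κ·Id_E. -/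
open Real Set Filter
open scoped RealInnerProductSpace

section aux
variable {E : Type*} [NormedAddCommGroup E] [InnerProductSpace ℝ E] [FiniteDimensional ℝ E]

lemma aux_trace_sum (f : E →L[ℝ] E) :
    LinearMap.trace ℝ E (f : E →ₗ[ℝ] E)
      = ∑ i, ⟪(stdOrthonormalBasis ℝ E) i, f ((stdOrthonormalBasis ℝ E) i)⟫ := by
  set e := stdOrthonormalBasis ℝ E
  rw [LinearMap.trace_eq_matrix_trace ℝ e.toBasis, Matrix.trace]
  congr 1
  ext i
  rw [Matrix.diag_apply, LinearMap.toMatrix_apply, e.coe_toBasis_repr_apply,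
    e.repr_apply_apply, OrthonormalBasis.coe_toBasis]
  rfl

lemma aux_trace_sq (B : E →L[ℝ] E) (hB : IsSelfAdjoint B) :
    LinearMap.trace ℝ E ((B * B : E →L[ℝ] E) : E →ₗ[ℝ] E)
      = ∑ i, ‖B ((stdOrthonormalBasis ℝ E) i)‖ ^ 2 := by
  rw [aux_trace_sum]
  congr 1; ext i
  rw [ContinuousLinearMap.mul_apply]
  rw [← (ContinuousLinearMap.isSelfAdjoint_iff_isSymmetric.mp hB).apply_clm _ _]
  exact real_inner_self_eq_norm_sq _

lemma aux_expand (A : E →L[ℝ] E) (c : ℝ) :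
    LinearMap.trace ℝ E (((A - c • 1) * (A - c • 1) : E →L[ℝ] E) : E →ₗ[ℝ] E)
      = LinearMap.trace ℝ E ((A * A : E →L[ℝ] E) : E →ₗ[ℝ] E)
        - 2 * c * LinearMap.trace ℝ E (A : E →ₗ[ℝ] E) + c ^ 2 * Module.finrank ℝ E := by
  have h : ((A - c • 1) * (A - c • 1) : E →L[ℝ] E)
      = A * A - c • A - c • A + (c * c) • 1 := by
    ext x
    simp only [ContinuousLinearMap.mul_apply, ContinuousLinearMap.sub_apply,
      ContinuousLinearMap.add_apply, ContinuousLinearMap.smul_apply,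
      ContinuousLinearMap.one_apply, map_sub, map_smul]
    module
  rw [h]
  have h1 : ((1 : E →L[ℝ] E) : E →ₗ[ℝ] E) = 1 := rfl
  simp only [ContinuousLinearMap.coe_sub, ContinuousLinearMap.coe_add,
    ContinuousLinearMap.coe_smul, h1, map_sub, map_add, map_smul,
    LinearMap.trace_one, smul_eq_mul]
  ring

lemma aux_sa_smul_one (c : ℝ) : IsSelfAdjoint (c • (1 : E →L[ℝ] E)) := by
  rw [ContinuousLinearMap.isSelfAdjoint_iff_isSymmetric]
  intro x y
  simp [real_inner_smul_left, real_inner_smul_right]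

lemma aux_main (n : ℕ) (hn : 0 < n) (hdim : Module.finrank ℝ E = n) (A : E →L[ℝ] E) :
    (n : ℝ) * LinearMap.trace ℝ E ((A * A : E →L[ℝ] E) : E →ₗ[ℝ] E)
        - LinearMap.trace ℝ E (A : E →ₗ[ℝ] E) ^ 2
      = (n : ℝ) * LinearMap.trace ℝ E
          (((A - (LinearMap.trace ℝ E (A : E →ₗ[ℝ] E) / n) • 1)
            * (A - (LinearMap.trace ℝ E (A : E →ₗ[ℝ] E) / n) • 1) : E →L[ℝ] E) : E →ₗ[ℝ] E) := by
  rw [aux_expand, hdim]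
  have hn' : (n:ℝ) ≠ 0 := Nat.cast_ne_zero.mpr hn.ne'
  field_simp
  ring

lemma aux_cs (n : ℕ) (hn : 0 < n) (hdim : Module.finrank ℝ E = n) (A : E →L[ℝ] E)
    (hA : IsSelfAdjoint A) :
    LinearMap.trace ℝ E (A : E →ₗ[ℝ] E) ^ 2
      ≤ (n : ℝ) * LinearMap.trace ℝ E ((A * A : E →L[ℝ] E) : E →ₗ[ℝ] E) := by
  have h := aux_main n hn hdim A
  have hB : IsSelfAdjoint (A - (LinearMap.trace ℝ E (A : E →ₗ[ℝ] E) / n) • (1 : E →L[ℝ] E)) :=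
    hA.sub (aux_sa_smul_one _)
  have h1 := aux_trace_sq _ hB
  have hnn : (0:ℝ) ≤ LinearMap.trace ℝ E
      (((A - (LinearMap.trace ℝ E (A : E →ₗ[ℝ] E) / n) • 1)
        * (A - (LinearMap.trace ℝ E (A : E →ₗ[ℝ] E) / n) • 1) : E →L[ℝ] E) : E →ₗ[ℝ] E) := by
    rw [h1]; positivity
  nlinarith [hnn, h]

lemma aux_cs_eq (n : ℕ) (hn : 0 < n) (hdim : Module.finrank ℝ E = n) (A : E →L[ℝ] E)
    (hA : IsSelfAdjoint A)
    (h : (n : ℝ) * LinearMap.trace ℝ E ((A * A : E →L[ℝ] E) : E →ₗ[ℝ] E)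
        = LinearMap.trace ℝ E (A : E →ₗ[ℝ] E) ^ 2) :
    A = (LinearMap.trace ℝ E (A : E →ₗ[ℝ] E) / n) • 1 := by
  set c : ℝ := LinearMap.trace ℝ E (A : E →ₗ[ℝ] E) / n with hc
  have hB : IsSelfAdjoint (A - c • (1 : E →L[ℝ] E)) := hA.sub (aux_sa_smul_one _)
  have h1 := aux_trace_sq _ hB
  have hmain := aux_main n hn hdim A
  have hn' : (n:ℝ) ≠ 0 := Nat.cast_ne_zero.mpr hn.ne'
  have hz : (∑ i, ‖(A - c • (1:E →L[ℝ] E)) ((stdOrthonormalBasis ℝ E) i)‖ ^ 2) = 0 := by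
    rw [← h1]
    have : (n : ℝ) * LinearMap.trace ℝ E
        (((A - c • 1) * (A - c • 1) : E →L[ℝ] E) : E →ₗ[ℝ] E) = 0 := by
      rw [← hmain, h]; ring
    exact (mul_eq_zero.mp this).resolve_left hn'
  have hzero : ∀ i, (A - c • (1 : E →L[ℝ] E)) ((stdOrthonormalBasis ℝ E) i) = 0 := by
    intro i
    have h3 := (Finset.sum_eq_zero_iff_of_nonneg
      (fun j _ => by positivity : ∀ j ∈ Finset.univ,
        (0:ℝ) ≤ ‖(A - c • (1 : E →L[ℝ] E)) ((stdOrthonormalBasis ℝ E) j)‖ ^ 2)).mp hz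
      i (Finset.mem_univ i)
    have := pow_eq_zero_iff (n := 2) (by norm_num) |>.mp h3
    simpa using this
  have hBzero : A - c • (1 : E →L[ℝ] E) = 0 := by
    apply ContinuousLinearMap.coe_injective
    apply (stdOrthonormalBasis ℝ E).toBasis.ext
    intro i
    simpa using hzero i
  exact sub_eq_zero.mp hBzero

end aux

set_option maxHeartbeats 1000000 in
theorem riccati_operator_rigidity
    {E : Type*} [NormedAddCommGroup E] [InnerProductSpace ℝ E] [FiniteDimensional ℝ E]
    (n : ℕ) (hn : 0 < n) (hdim : Module.finrank ℝ E = n)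
    (κ b t₀ : ℝ) (hb : 0 < b) (ht₀ : t₀ ∈ Set.Ioo 0 b)
    (R : ℝ → E →L[ℝ] E) (hRsmooth : ContDiff ℝ (⊤ : ℕ∞) R)
    (hRsa : ∀ t, IsSelfAdjoint (R t))
    (hRtr : ∀ t, (n : ℝ) * κ ≤ LinearMap.trace ℝ E (R t : E →ₗ[ℝ] E))
    (S : ℝ → E →L[ℝ] E)
    (hSsa : ∀ t ∈ Set.Ioo 0 b, IsSelfAdjoint (S t))
    (hSdiff : ∀ t ∈ Set.Ioo 0 b, DifferentiableAt ℝ S t)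
    (hS : ∀ t ∈ Set.Ioo 0 b, deriv S t + S t * S t + R t = 0)
    (skap : ℝ → ℝ)
    (hskdiff : ∀ t ∈ Set.Ioo 0 b, DifferentiableAt ℝ skap t)
    (hskap : ∀ t ∈ Set.Ioo 0 b, deriv skap t + (skap t) ^ 2 + κ = 0)
    (hcomp : ∀ t ∈ Set.Ioo 0 b,
      LinearMap.trace ℝ E (S t : E →ₗ[ℝ] E) ≤ (n : ℝ) * skap t)
    (L : ℝ) (hL : 0 ≤ L)
    (hlim : Filter.Tendsto
      (fun t => skap t - (1 / (n : ℝ)) * LinearMap.trace ℝ E (S t : E →ₗ[ℝ] E))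
      (nhdsWithin 0 (Set.Ioi 0)) (nhds L))
    (heq : LinearMap.trace ℝ E (S t₀ : E →ₗ[ℝ] E) = (n : ℝ) * skap t₀) :
    ∀ t ∈ Set.Ioc 0 t₀,
      S t = skap t • (1 : E →L[ℝ] E) ∧ R t = κ • (1 : E →L[ℝ] E) := by
  classical
  obtain ⟨ht₀0, ht₀b⟩ := ht₀
  have hnR : (0:ℝ) < n := Nat.cast_pos.mpr hn
  have hn' : (n:ℝ) ≠ 0 := hnR.ne'
  -- trace as a continuous linear map
  obtain ⟨trC, htrC⟩ : ∃ T : (E →L[ℝ] E) →L[ℝ] ℝ,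
      ∀ f : E →L[ℝ] E, T f = LinearMap.trace ℝ E (f : E →ₗ[ℝ] E) := by
    refine ⟨⟨(LinearMap.trace ℝ E) ∘ₗ (ContinuousLinearMap.coeLM ℝ),
      LinearMap.continuous_of_finiteDimensional _⟩, fun f => rfl⟩
  set φ : ℝ → ℝ := fun t => skap t - (n:ℝ)⁻¹ * trC (S t) with hφdef
  have hφt₀ : φ t₀ = 0 := by
    simp only [hφdef, htrC, heq]
    field_simp
    ring
  have hφnonneg : ∀ t ∈ Set.Ioo 0 b, 0 ≤ φ t := by
    intro t ht
    have h := hcomp t ht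
    rw [← htrC] at h
    have h2 : (n:ℝ)⁻¹ * trC (S t) ≤ (n:ℝ)⁻¹ * ((n:ℝ) * skap t) :=
      mul_le_mul_of_nonneg_left h (by positivity)
    rw [inv_mul_cancel_left₀ hn'] at h2
    simp only [hφdef]
    linarith
  -- derivative facts
  have hSd : ∀ t ∈ Set.Ioo 0 b, HasDerivAt (fun s => trC (S s)) (trC (deriv S t)) t := by
    intro t ht
    exact trC.hasFDerivAt.comp_hasDerivAt t (hSdiff t ht).hasDerivAt
  have hφd : ∀ t ∈ Set.Ioo 0 b,
      HasDerivAt φ (deriv skap t - (n:ℝ)⁻¹ * trC (deriv S t)) t := by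
    intro t ht
    exact (hskdiff t ht).hasDerivAt.sub ((hSd t ht).const_mul _)
  have hSeq : ∀ t ∈ Set.Ioo 0 b, deriv S t = -(S t * S t) - R t := by
    intro t ht
    have h := hS t ht
    rw [add_assoc] at h
    rw [eq_neg_of_add_eq_zero_left h, neg_add]
    abel
  have htrderiv : ∀ t ∈ Set.Ioo 0 b,
      trC (deriv S t) = -(trC (S t * S t)) - trC (R t) := by
    intro t ht
    rw [hSeq t ht, map_sub, map_neg]
  have hskd : ∀ t ∈ Set.Ioo 0 b, deriv skap t = -(skap t)^2 - κ := by
    intro t ht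
    have := hskap t ht
    linarith
  -- key differential inequality
  have hkey : ∀ t ∈ Set.Ioo 0 b,
      -(skap t + (n:ℝ)⁻¹ * trC (S t)) * φ t
        ≤ deriv skap t - (n:ℝ)⁻¹ * trC (deriv S t) := by
    intro t ht
    have cs := aux_cs n hn hdim (S t) (hSsa t ht)
    rw [← htrC, ← htrC] at cs
    have hR := hRtr (t := t)
    rw [← htrC] at hR
    rw [htrderiv t ht, hskd t ht]
    simp only [hφdef]
    have hinv : (0:ℝ) < (n:ℝ)⁻¹ := by positivity
    have h1 : (n:ℝ)⁻¹ * (trC (S t))^2 ≤ trC (S t * S t) := by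
      have := mul_le_mul_of_nonneg_left cs hinv.le
      rwa [inv_mul_cancel_left₀ hn'] at this
    have h2 := mul_le_mul_of_nonneg_left h1 hinv.le
    have h3 : κ ≤ (n:ℝ)⁻¹ * trC (R t) := by
      have := mul_le_mul_of_nonneg_left hR hinv.le
      rwa [inv_mul_cancel_left₀ hn'] at this
    nlinarith [h2, h3]
  -- phi vanishes on (0, t₀]
  have hφzero : ∀ t ∈ Set.Ioc 0 t₀, φ t = 0 := by
    intro t₁ ht₁
    rcases eq_or_lt_of_le ht₁.2 with hE | hlt
    · rw [hE]; exact hφt₀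
    have hsub : Set.Icc t₁ t₀ ⊆ Set.Ioo 0 b := fun s hs =>
      ⟨lt_of_lt_of_le ht₁.1 hs.1, lt_of_le_of_lt hs.2 ht₀b⟩
    have hccont : ContinuousOn (fun s => skap s + (n:ℝ)⁻¹ * trC (S s)) (Set.Icc t₁ t₀) := by
      intro s hs
      have hs' := hsub hs
      exact (((hskdiff s hs').continuousAt).add
        (((hSd s hs').continuousAt).const_mul _)).continuousWithinAt
    obtain ⟨K, hK⟩ := isCompact_Icc.exists_bound_of_continuousOn hccont
    set ψ : ℝ → ℝ := fun s => φ s * Real.exp (K * s) with hψdef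
    have hψd : ∀ s ∈ Set.Ioo 0 b, HasDerivAt ψ
        (((deriv skap s - (n:ℝ)⁻¹ * trC (deriv S s)) + K * φ s) * Real.exp (K * s)) s := by
      intro s hs
      have h1 := hφd s hs
      have h2 : HasDerivAt (fun x => Real.exp (K * x)) (Real.exp (K * s) * K) s := by
        simpa using ((hasDerivAt_id s).const_mul K).exp
      have : HasDerivAt (fun y => φ y * Real.exp (K * y)) _ s := h1.mul h2
      convert this using 1
      ring
    have hmono : MonotoneOn ψ (Set.Icc t₁ t₀) := by
      apply monotoneOn_of_deriv_nonneg (convex_Icc t₁ t₀)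
      · intro s hs
        exact (hψd s (hsub hs)).continuousAt.continuousWithinAt
      · rw [interior_Icc]
        intro s hs
        exact (hψd s (hsub (Set.Ioo_subset_Icc_self hs))).differentiableAt.differentiableWithinAt
      · rw [interior_Icc]
        intro s hs
        have hs' := hsub (Set.Ioo_subset_Icc_self hs)
        rw [(hψd s hs').deriv]
        have hk := hkey s hs'
        have hφn := hφnonneg s hs'
        have hKb := hK s (Set.Ioo_subset_Icc_self hs)
        have hcs : skap s + (n:ℝ)⁻¹ * trC (S s) ≤ K := by
          have := le_abs_self (skap s + (n:ℝ)⁻¹ * trC (S s))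
          calc skap s + (n:ℝ)⁻¹ * trC (S s) ≤ ‖skap s + (n:ℝ)⁻¹ * trC (S s)‖ := by
                rw [Real.norm_eq_abs]; exact this
            _ ≤ K := hKb
        have hexp := Real.exp_pos (K * s)
        have h0 : 0 ≤ (deriv skap s - (n:ℝ)⁻¹ * trC (deriv S s)) + K * φ s := by
          nlinarith [mul_nonneg (sub_nonneg.mpr hcs) hφn]
        exact mul_nonneg h0 hexp.le
    have h1 : ψ t₁ ≤ ψ t₀ :=
      hmono (Set.left_mem_Icc.mpr hlt.le) (Set.right_mem_Icc.mpr hlt.le) hlt.le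
    have h2 : ψ t₀ = 0 := by simp [hψdef, hφt₀]
    have hexp := Real.exp_pos (K * t₁)
    have hφn := hφnonneg t₁ ⟨ht₁.1, lt_trans hlt ht₀b⟩
    rw [h2] at h1
    simp only [hψdef] at h1
    nlinarith
  -- rigidity for S and trace of R
  have hSid : ∀ t ∈ Set.Ioc 0 t₀,
      S t = skap t • (1 : E →L[ℝ] E) := by
    intro t ht
    have htb : t ∈ Set.Ioo 0 b := ⟨ht.1, lt_of_le_of_lt ht.2 ht₀b⟩
    have hmin : IsLocalMin φ t := by
      have hnb : Set.Ioo 0 b ∈ nhds t := isOpen_Ioo.mem_nhds htb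
      have : ∀ᶠ s in nhds t, φ t ≤ φ s :=
        Filter.eventually_of_mem hnb (fun s hs => (hφzero t ht) ▸ hφnonneg s hs)
      exact this
    have hd0 : deriv φ t = 0 := hmin.deriv_eq_zero
    rw [(hφd t htb).deriv] at hd0
    rw [htrderiv t htb, hskd t htb] at hd0
    have hφt : φ t = 0 := hφzero t ht
    have htreq : trC (S t) = (n:ℝ) * skap t := by
      simp only [hφdef] at hφt
      have : (n:ℝ)⁻¹ * trC (S t) = skap t := by linarith
      field_simp at this
      linarith
    have cs := aux_cs n hn hdim (S t) (hSsa t htb)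
    rw [← htrC, ← htrC] at cs
    have hR := hRtr (t := t)
    rw [← htrC] at hR
    -- equalities
    have hSS : trC (S t * S t) = (n:ℝ) * (skap t)^2 := by
      have h1 : (n:ℝ) * (skap t)^2 ≤ trC (S t * S t) := by
        rw [htreq] at cs
        nlinarith
      have h7 : (n:ℝ)⁻¹ * trC (S t * S t) + (n:ℝ)⁻¹ * trC (R t) = skap t ^ 2 + κ := by
        have hrg : (n:ℝ)⁻¹ * (-trC (S t * S t) - trC (R t))
            = -((n:ℝ)⁻¹ * trC (S t * S t)) - (n:ℝ)⁻¹ * trC (R t) := by ring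
        rw [hrg] at hd0
        linarith
      have h8 : trC (S t * S t) + trC (R t) = (n:ℝ) * skap t ^ 2 + (n:ℝ) * κ := by
        calc trC (S t * S t) + trC (R t)
            = (n:ℝ) * ((n:ℝ)⁻¹ * trC (S t * S t)) + (n:ℝ) * ((n:ℝ)⁻¹ * trC (R t)) := by
              rw [mul_inv_cancel_left₀ hn', mul_inv_cancel_left₀ hn']
          _ = (n:ℝ) * ((n:ℝ)⁻¹ * trC (S t * S t) + (n:ℝ)⁻¹ * trC (R t)) := by ring
          _ = (n:ℝ) * (skap t ^ 2 + κ) := by rw [h7]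
          _ = (n:ℝ) * skap t ^ 2 + (n:ℝ) * κ := by ring
      linarith [hR, h1, h8]
    have heqcase : (n:ℝ) * trC (S t * S t) = (trC (S t))^2 := by
      rw [hSS, htreq]; ring
    rw [htrC, htrC] at heqcase
    have := aux_cs_eq n hn hdim (S t) (hSsa t htb) heqcase
    rw [this, ← htrC, htreq]
    congr 1
    field_simp
  -- R on the open part
  have hRid : ∀ s ∈ Set.Ioo 0 t₀, R s = κ • (1 : E →L[ℝ] E) := by
    intro s hs
    have hsb : s ∈ Set.Ioo 0 b := ⟨hs.1, lt_trans hs.2 ht₀b⟩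
    have hev : S =ᶠ[nhds s] fun x => skap x • (1 : E →L[ℝ] E) :=
      Filter.eventually_of_mem (isOpen_Ioo.mem_nhds hs)
        (fun x hx => hSid x ⟨hx.1, hx.2.le⟩)
    have hder : HasDerivAt (fun x => skap x • (1 : E →L[ℝ] E))
        ((deriv skap s) • (1 : E →L[ℝ] E)) s :=
      (hskdiff s hsb).hasDerivAt.smul_const (1 : E →L[ℝ] E)
    have hderS : deriv S s = (deriv skap s) • (1 : E →L[ℝ] E) := by
      rw [hev.deriv_eq]; exact hder.deriv
    have hRs : R s = -(deriv S s + S s * S s) :=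
      eq_neg_of_add_eq_zero_right (hS s hsb)
    rw [hRs, hderS, hSid s ⟨hs.1, hs.2.le⟩]
    have hmul : (skap s • (1 : E →L[ℝ] E)) * (skap s • (1 : E →L[ℝ] E))
        = ((skap s)^2) • (1 : E →L[ℝ] E) := by
      ext x
      simp [ContinuousLinearMap.mul_apply, smul_smul, sq]
    rw [hmul, ← add_smul, ← neg_smul]
    congr 1
    have := hskap s hsb
    linarith
  -- conclusion
  intro t ht
  refine ⟨hSid t ht, ?_⟩
  rcases eq_or_lt_of_le ht.2 with hE | hlt
  · subst hE
    have hcont : ContinuousAt R t := hRsmooth.continuous.continuousAt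
    have hne : (nhdsWithin t (Set.Ioo 0 t)).NeBot := by
      rw [← mem_closure_iff_nhdsWithin_neBot, closure_Ioo (ne_of_lt ht.1)]
      exact ⟨ht.1.le, le_refl t⟩
    have h1 : Filter.Tendsto R (nhdsWithin t (Set.Ioo 0 t)) (nhds (R t)) :=
      hcont.continuousWithinAt.tendsto
    have h2 : Filter.Tendsto R (nhdsWithin t (Set.Ioo 0 t))
        (nhds (κ • (1 : E →L[ℝ] E))) := by
      apply Filter.Tendsto.congr' _ tendsto_const_nhds
      filter_upwards [self_mem_nhdsWithin] with s hs
      exact (hRid s hs).symm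
    exact tendsto_nhds_unique h1 h2
  · exact hRid t ⟨ht.1, hlt⟩
end

section
/- Past reachability in the comparison warped product: let κ, β ∈ ℝ with κ > 0 or β ≤ −(n−1)√|κ|, and let M = [0, b_{κ,β}) ×_{f_{κ,β}} Σ for a connected Riemannian manifold (Σ,h). Then for any t ∈ [0, b_{κ,β}) and r > 0 there exists t̃ ∈ (t, b_{κ,β}) such that {t} × B_p(r) ⊂ J⁻((t̃, p)) for every p ∈ Σ; moreover M = J⁻([0, b_{κ,β}) × {p}) for any p ∈ Σ. -/
open Real Set

/-- Inverse hyperbolic tangent, `artanh x = ½ log((1+x)/(1−x))`; `coth⁻¹ y = artanh (1/y)`. -/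
noncomputable def artanh (x : ℝ) : ℝ := Real.log ((1 + x) / (1 - x)) / 2

/-- The integration constant `c(κ,β)` of Table 1. -/
noncomputable def ckb (n : ℕ) (κ β : ℝ) : ℝ :=
  if 0 < κ then π / 2 - Real.arctan (β / (((n : ℝ) - 1) * Real.sqrt κ))
  else if κ = 0 then (if β = 0 then 0 else ((n : ℝ) - 1) / β)
  else if |β| < ((n : ℝ) - 1) * Real.sqrt (-κ) then
    _root_.artanh (β / (((n : ℝ) - 1) * Real.sqrt (-κ)))
  else if |β| = ((n : ℝ) - 1) * Real.sqrt (-κ) then 0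
  else _root_.artanh ((((n : ℝ) - 1) * Real.sqrt (-κ)) / β)

/-- The comparison warping function `f_{κ,β}` of Table 1. -/
noncomputable def fkb (n : ℕ) (κ β : ℝ) (t : ℝ) : ℝ :=
  if 0 < κ then Real.sin (Real.sqrt κ * t + ckb n κ β) / Real.sqrt κ
  else if κ = 0 then (if β = 0 then 1 else t + ckb n κ β)
  else if |β| < ((n : ℝ) - 1) * Real.sqrt (-κ) then
    Real.cosh (Real.sqrt (-κ) * t + ckb n κ β) / Real.sqrt (-κ)
  else if |β| = ((n : ℝ) - 1) * Real.sqrt (-κ) then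
    Real.exp ((if 0 ≤ β then 1 else -1) * Real.sqrt (-κ) * t)
  else Real.sinh (Real.sqrt (-κ) * t + ckb n κ β) / Real.sqrt (-κ)

/-- The right endpoint `b_{κ,β}` (first zero of `f_{κ,β}` after `0`, or `∞`). -/
noncomputable def bkb (n : ℕ) (κ β : ℝ) : EReal :=
  if 0 < κ then (((π - ckb n κ β) / Real.sqrt κ : ℝ) : EReal)
  else if κ = 0 then (if β < 0 then ((-(((n : ℝ) - 1) / β) : ℝ) : EReal) else ⊤)
  else if β < -(((n : ℝ) - 1) * Real.sqrt (-κ)) then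
    ((-(ckb n κ β) / Real.sqrt (-κ) : ℝ) : EReal)
  else ⊤

/-- `x` lies in the causal past of `y` in the Lorentzian warped product
`−dt² + f(t)² h` over the metric space `X`: there is a future directed causal curve
from `x` to `y`, written with its spatial projection `cb` parametrized `1`-Lipschitz
(h-arclength) and time component `c₀` satisfying `c₀' ≥ |f ∘ c₀|`. -/
def causalPast {X : Type*} [MetricSpace X] (f : ℝ → ℝ) (x y : ℝ × X) : Prop :=
  x = y ∨ ∃ (S : ℝ) (c₀ : ℝ → ℝ) (cb : ℝ → X), 0 < S ∧
    c₀ 0 = x.1 ∧ c₀ S = y.1 ∧ cb 0 = x.2 ∧ cb S = y.2 ∧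
    LipschitzWith 1 cb ∧
    ∀ s ∈ Set.Icc 0 S, ∃ d : ℝ, |f (c₀ s)| ≤ d ∧ HasDerivAt c₀ d s
/-!
Parametrize the spatial part of a curve by `h`-arclength `s`; the curve is future causal as soon
as its time component satisfies `t'(s) ≥ |f(t(s))|`. Under the hypothesis on `(κ, β)`, the
function `f_{κ,β}` is bounded on `[0, ∞)` when `b_{κ,β} = ∞`, and vanishes at most linearly at
`b = b_{κ,β}` when `b < ∞`: `|f(t)| ≤ K (b - t)`. The solution of `t' = K (b - t)` approaches `b`
without reaching it, so a time component can stay below `b` for arbitrarily long spatial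
length. Since `Σ` is a length space, every point of `B_p(r)` is joined to `p` by a curve of
length less than `r`.
-/

/-- The time component `u` of a future causal curve, defined on `[0, T]`, whose spatial part
has `h`-speed at most `1` (the last clause of `causalPast`). -/
def IsCausalTimeComponent (f : ℝ → ℝ) (T : ℝ) (u : ℝ → ℝ) : Prop :=
  ∀ s ∈ Icc 0 T, ∃ d : ℝ, |f (u s)| ≤ d ∧ HasDerivAt u d s

section CausalCurves

variable {X : Type*} [MetricSpace X] {f : ℝ → ℝ} {T : ℝ} {u : ℝ → ℝ}

theorem causalPast_of_lipschitzWith (hT : 0 < T) (hu : IsCausalTimeComponent f T u)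
    {γ : ℝ → X} (hγ : LipschitzWith 1 γ) {S : ℝ} (hS : 0 ≤ S) (hST : S ≤ T) :
    causalPast f (u 0, γ 0) (u T, γ S) := by
  refine Or.inr ⟨T, u, fun s => γ (min s S), hT, rfl, rfl, ?_, ?_, ?_, hu⟩
  · simp [hS]
  · simp [hST]
  · simpa [Function.comp_def] using hγ.comp (LipschitzWith.id.min_const S)

theorem causalPast_of_dist_lt
    (hlength : ∀ p q : X, ∀ ε : ℝ, 0 < ε → ∃ (S : ℝ) (cb : ℝ → X),
      0 < S ∧ S ≤ dist q p + ε ∧ LipschitzWith 1 cb ∧ cb 0 = q ∧ cb S = p)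
    (hT : 0 < T) (hu : IsCausalTimeComponent f T u) {p q : X} (hqp : dist q p < T) :
    causalPast f (u 0, q) (u T, p) := by
  obtain ⟨S, γ, hS, hST, hγ, rfl, rfl⟩ := hlength p q (T - dist q p) (by linarith)
  exact causalPast_of_lipschitzWith hT hu hγ hS.le (by linarith)

end CausalCurves

section TimeComponents

variable {f : ℝ → ℝ} {t K T : ℝ}

theorem exists_isCausalTimeComponent_of_abs_le (hK : 0 < K) (hT : 0 < T)
    (hf : ∀ x ∈ Ici t, |f x| ≤ K) :
    ∃ u : ℝ → ℝ, u 0 = t ∧ t < u T ∧ IsCausalTimeComponent f T u := by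
  refine ⟨fun s => t + K * s, by simp, by simpa using mul_pos hK hT, fun s hs => ?_⟩
  refine ⟨K, hf _ (by simpa using mul_nonneg hK.le hs.1), ?_⟩
  simpa using ((hasDerivAt_id s).const_mul K).const_add t

theorem exists_isCausalTimeComponent_of_abs_le_mul_sub {b : ℝ} (htb : t < b) (hK : 0 < K)
    (hT : 0 < T) (hf : ∀ x ∈ Ico t b, |f x| ≤ K * (b - x)) :
    ∃ u : ℝ → ℝ, u 0 = t ∧ u T ∈ Ioo t b ∧ IsCausalTimeComponent f T u := by
  -- `u` solves `u' = K (b - u)`, `u 0 = t`, so it increases towards `b` without reaching it.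
  set u : ℝ → ℝ := fun s => b - (b - t) * exp (-(K * s))
  have hu_lt : ∀ s, u s < b := fun s => by
    have := mul_pos (sub_pos.mpr htb) (exp_pos (-(K * s)))
    simp only [u]; linarith
  have hu_deriv : ∀ s, HasDerivAt u (K * (b - u s)) s := fun s => by
    have hexp : HasDerivAt (fun s => -(K * s)) (-K) s := by
      simpa using (hasDerivAt_id s).const_mul (-K)
    exact ((hexp.exp.const_mul (b - t)).const_sub b).congr_deriv (by simp only [u]; ring)
  refine ⟨u, by simp [u], ⟨?_, hu_lt T⟩, fun s hs => ⟨_, ?_, hu_deriv s⟩⟩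
  · have : exp (-(K * T)) < 1 := exp_lt_one_iff.mpr (by simpa using mul_pos hK hT)
    simp only [u]; nlinarith
  · have : exp (-(K * s)) ≤ 1 := exp_le_one_iff.mpr (by simpa using mul_nonneg hK.le hs.1)
    exact hf _ ⟨by simp only [u]; nlinarith, hu_lt s⟩

end TimeComponents

theorem Real.sinh_le_mul_cosh {y Y : ℝ} (hy : 0 ≤ y) (hyY : y ≤ Y) : sinh y ≤ y * cosh Y := by
  rcases hy.eq_or_lt with rfl | hy
  · simp
  obtain ⟨ξ, hξ, hslope⟩ := exists_hasDerivAt_eq_slope sinh cosh hy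
    continuous_sinh.continuousOn fun x _ => hasDerivAt_sinh x
  have hcosh : cosh ξ ≤ cosh Y := cosh_le_cosh.mpr <| by
    rw [abs_of_pos hξ.1, abs_of_pos (hy.trans_le hyY)]; linarith [hξ.2]
  rw [sinh_zero, sub_zero, sub_zero, eq_div_iff hy.ne'] at hslope
  nlinarith

section ComparisonFunction

variable {n : ℕ} {κ β : ℝ}

theorem ckb_mem_Ioo_of_pos (hκ : 0 < κ) : ckb n κ β ∈ Ioo 0 π := by
  have := neg_pi_div_two_lt_arctan (β / (((n : ℝ) - 1) * √κ))
  have := arctan_lt_pi_div_two (β / (((n : ℝ) - 1) * √κ))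
  simp only [ckb, if_pos hκ, mem_Ioo]
  constructor <;> linarith

theorem abs_fkb_le_of_pos (hκ : 0 < κ) {x : ℝ} (hx : 0 ≤ x)
    (hxb : x < (π - ckb n κ β) / √κ) : |fkb n κ β x| ≤ (π - ckb n κ β) / √κ - x := by
  have ha : 0 < √κ := sqrt_pos.mpr hκ
  obtain ⟨hc0, -⟩ := ckb_mem_Ioo_of_pos (n := n) (β := β) hκ
  set θ := √κ * x + ckb n κ β
  have hθ0 : 0 ≤ θ := by positivity
  have hθπ : θ ≤ π := by have := (lt_div_iff₀ ha).mp hxb; linarith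
  have hsin : sin θ ≤ π - θ := sin_pi_sub θ ▸ sin_le (by linarith)
  have hb : (π - ckb n κ β) / √κ - x = (π - θ) / √κ := by field_simp; ring
  rw [fkb, if_pos hκ, hb, abs_of_nonneg (div_nonneg (sin_nonneg_of_nonneg_of_le_pi hθ0 hθπ) ha.le)]
  gcongr

theorem abs_fkb_zero_of_neg (hβ : β < 0) {x : ℝ} (hxb : x < -(((n : ℝ) - 1) / β)) :
    |fkb n 0 β x| = -(((n : ℝ) - 1) / β) - x := by
  have hf : fkb n 0 β x = x + ((n : ℝ) - 1) / β := by simp [fkb, ckb, hβ.ne]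
  rw [hf, abs_of_neg (by linarith)]
  ring

theorem sub_one_mul_sqrt_neg_pos (hn : 1 < n) (hκ : κ < 0) : 0 < ((n : ℝ) - 1) * √(-κ) :=
  mul_pos (sub_pos.mpr (by exact_mod_cast hn)) (sqrt_pos.mpr (neg_pos.mpr hκ))

theorem abs_fkb_le_one_of_critical (hn : 1 < n) (hκ : κ < 0)
    (hβ : β = -(((n : ℝ) - 1) * √(-κ))) {x : ℝ} (hx : 0 ≤ x) : |fkb n κ β x| ≤ 1 := by
  have hβ0 : β < 0 := by linarith [sub_one_mul_sqrt_neg_pos hn hκ]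
  have habs : |β| = ((n : ℝ) - 1) * √(-κ) := by rw [abs_of_neg hβ0, hβ, neg_neg]
  rw [fkb, if_neg hκ.not_gt, if_neg hκ.ne, if_neg habs.not_lt, if_pos habs, if_neg hβ0.not_ge,
    abs_exp, exp_le_one_iff]
  have := sqrt_nonneg (-κ)
  nlinarith

theorem artanh_lt_zero {x : ℝ} (h1 : -1 < x) (h0 : x < 0) : _root_.artanh x < 0 := by
  have := log_neg (div_pos (by linarith) (by linarith) : 0 < (1 + x) / (1 - x))
    ((div_lt_one (by linarith)).mpr (by linarith))
  unfold _root_.artanh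
  linarith

theorem supercritical_branch_conditions (hn : 1 < n) (hκ : κ < 0)
    (hβ : β < -(((n : ℝ) - 1) * √(-κ))) :
    ¬ 0 < κ ∧ κ ≠ 0 ∧ ¬ |β| < ((n : ℝ) - 1) * √(-κ) ∧ ¬ |β| = ((n : ℝ) - 1) * √(-κ) := by
  have hna := sub_one_mul_sqrt_neg_pos hn hκ
  have habs : ((n : ℝ) - 1) * √(-κ) < |β| := by rw [abs_of_neg (by linarith)]; linarith
  exact ⟨hκ.not_gt, hκ.ne, habs.not_gt, habs.ne'⟩

theorem ckb_neg_of_supercritical (hn : 1 < n) (hκ : κ < 0)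
    (hβ : β < -(((n : ℝ) - 1) * √(-κ))) : ckb n κ β < 0 := by
  obtain ⟨h₁, h₂, h₃, h₄⟩ := supercritical_branch_conditions hn hκ hβ
  have hna := sub_one_mul_sqrt_neg_pos hn hκ
  have hβ0 : β < 0 := by linarith
  rw [ckb, if_neg h₁, if_neg h₂, if_neg h₃, if_neg h₄]
  exact artanh_lt_zero ((lt_div_iff_of_neg hβ0).mpr (by linarith)) (div_neg_of_pos_of_neg hna hβ0)

theorem abs_fkb_le_of_supercritical (hn : 1 < n) (hκ : κ < 0)
    (hβ : β < -(((n : ℝ) - 1) * √(-κ))) {x : ℝ} (hx : 0 ≤ x) (hxb : x < -ckb n κ β / √(-κ)) :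
    |fkb n κ β x| ≤ cosh (ckb n κ β) * (-ckb n κ β / √(-κ) - x) := by
  obtain ⟨h₁, h₂, h₃, h₄⟩ := supercritical_branch_conditions hn hκ hβ
  have hc := ckb_neg_of_supercritical hn hκ hβ
  have ha : 0 < √(-κ) := sqrt_pos.mpr (neg_pos.mpr hκ)
  set y := -(√(-κ) * x + ckb n κ β)
  have hy0 : 0 < y := by have := (lt_div_iff₀ ha).mp hxb; linarith
  have hyc : y ≤ -ckb n κ β := by have := mul_nonneg ha.le hx; linarith
  have hb : -ckb n κ β / √(-κ) - x = y / √(-κ) := by field_simp; ring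
  have hsinh := sinh_le_mul_cosh hy0.le hyc
  rw [cosh_neg] at hsinh
  rw [fkb, if_neg h₁, if_neg h₂, if_neg h₃, if_neg h₄, hb, abs_div, abs_of_pos ha,
    show √(-κ) * x + ckb n κ β = -y by ring, sinh_neg, abs_neg,
    abs_of_pos (sinh_pos_iff.mpr hy0), mul_div_assoc', div_le_div_iff_of_pos_right ha]
  linarith

theorem fkb_bounded_or_vanishes_linearly (hn : 1 < n)
    (hcase : 0 < κ ∨ β ≤ -(((n : ℝ) - 1) * √|κ|)) :
    (bkb n κ β = ⊤ ∧ ∀ x ∈ Ici 0, |fkb n κ β x| ≤ 1) ∨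
      ∃ b K : ℝ, bkb n κ β = b ∧ 0 < K ∧ ∀ x ∈ Ico 0 b, |fkb n κ β x| ≤ K * (b - x) := by
  rcases lt_trichotomy κ 0 with hκ | rfl | hκ
  · have hβ : β ≤ -(((n : ℝ) - 1) * √(-κ)) := by
      simpa [abs_of_neg hκ, hκ.not_gt] using hcase
    rcases hβ.lt_or_eq with hβ | hβ
    · refine .inr ⟨_, _, ?_, cosh_pos _, fun x hx => abs_fkb_le_of_supercritical hn hκ hβ hx.1 hx.2⟩
      simp [bkb, hκ.not_gt, hκ.ne, hβ]
    · refine .inl ⟨?_, fun x hx => abs_fkb_le_one_of_critical hn hκ hβ hx⟩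
      simp [bkb, hκ.not_gt, hκ.ne, hβ]
  · have hβ : β ≤ 0 := by simpa using hcase
    rcases hβ.lt_or_eq with hβ | rfl
    · exact .inr ⟨_, 1, by rw [bkb, if_neg (lt_irrefl 0), if_pos rfl, if_pos hβ], one_pos,
        fun x hx => by rw [one_mul, abs_fkb_zero_of_neg hβ hx.2]⟩
    · exact .inl ⟨by simp [bkb], fun x _ => by simp [fkb]⟩
  · exact .inr ⟨_, 1, by rw [bkb, if_pos hκ], one_pos,
      fun x hx => by rw [one_mul]; exact abs_fkb_le_of_pos hκ hx.1 hx.2⟩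

theorem exists_isCausalTimeComponent_fkb (hn : 1 < n)
    (hcase : 0 < κ ∨ β ≤ -(((n : ℝ) - 1) * √|κ|)) {t T : ℝ} (ht : 0 ≤ t)
    (htb : (t : EReal) < bkb n κ β) (hT : 0 < T) :
    ∃ u : ℝ → ℝ, u 0 = t ∧ t < u T ∧ (u T : EReal) < bkb n κ β ∧
      IsCausalTimeComponent (fkb n κ β) T u := by
  rcases fkb_bounded_or_vanishes_linearly hn hcase with ⟨hb, hf⟩ | ⟨b, K, hb, hK, hf⟩
  · obtain ⟨u, hu0, htu, hu⟩ :=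
      exists_isCausalTimeComponent_of_abs_le one_pos hT fun x hx => hf x (ht.trans hx)
    exact ⟨u, hu0, htu, hb ▸ EReal.coe_lt_top _, hu⟩
  · simp only [hb, EReal.coe_lt_coe_iff] at htb ⊢
    obtain ⟨u, hu0, ⟨htu, hub⟩, hu⟩ := exists_isCausalTimeComponent_of_abs_le_mul_sub htb hK hT
      fun x hx => hf x ⟨ht.trans hx.1, hx.2⟩
    exact ⟨u, hu0, htu, hub, hu⟩

end ComparisonFunction

/-- Past reachability in the comparison warped product
`M = [0, b_{κ,β}) ×_{f_{κ,β}} Σ`: balls `{t} × B_p(r)` are contained in `J⁻((t̃,p))` for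
a suitable uniform `t̃ < b_{κ,β}`, and `M = J⁻([0,b_{κ,β}) × {p})` for every `p`.
The connected Riemannian manifold `(Σ,h)` is abstracted as a metric length space. -/
theorem comparison_warped_product_past_reachability
    {X : Type*} [MetricSpace X]
    (hlength : ∀ p q : X, ∀ ε : ℝ, 0 < ε → ∃ (S : ℝ) (cb : ℝ → X),
      0 < S ∧ S ≤ dist q p + ε ∧ LipschitzWith 1 cb ∧ cb 0 = q ∧ cb S = p)
    (n : ℕ) (hn : 2 ≤ n) (κ β : ℝ)
    (hcase : 0 < κ ∨ β ≤ -(((n : ℝ) - 1) * Real.sqrt |κ|)) :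
    (∀ t : ℝ, 0 ≤ t → (t : EReal) < bkb n κ β → ∀ r : ℝ, 0 < r →
      ∃ tt : ℝ, t < tt ∧ (tt : EReal) < bkb n κ β ∧
        ∀ p q : X, dist q p < r → causalPast (fkb n κ β) (t, q) (tt, p)) ∧
    (∀ p q : X, ∀ s : ℝ, 0 ≤ s → (s : EReal) < bkb n κ β →
      ∃ tt : ℝ, 0 ≤ tt ∧ (tt : EReal) < bkb n κ β ∧
        causalPast (fkb n κ β) (s, q) (tt, p)) := by
  have past_ball : ∀ t : ℝ, 0 ≤ t → (t : EReal) < bkb n κ β → ∀ r : ℝ, 0 < r →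
      ∃ tt : ℝ, t < tt ∧ (tt : EReal) < bkb n κ β ∧
        ∀ p q : X, dist q p < r → causalPast (fkb n κ β) (t, q) (tt, p) := by
    intro t ht htb r hr
    obtain ⟨u, rfl, htu, hub, hu⟩ := exists_isCausalTimeComponent_fkb hn hcase ht htb hr
    exact ⟨u r, htu, hub, fun p q hqp => causalPast_of_dist_lt hlength hr hu hqp⟩
  refine ⟨past_ball, fun p q s hs hsb => ?_⟩
  obtain ⟨tt, hst, htt, hpast⟩ := past_ball s hs hsb (dist q p + 1) (by positivity)
  exact ⟨tt, hs.trans hst.le, htt, hpast p q (lt_add_one _)⟩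
end

section
/- Mean curvature blow-up forces focal points: let H : [t₀, b) → ℝ be differentiable with H' + H²/(n−1) ≤ (n−1)κ and H(t₀) = β̃. Then H(t) ≤ H_{κ,β̃}(t − t₀) for t ∈ [t₀, t₀ + b_{κ,β̃}), and H(t) → −∞ as t → (t₀ + b_{κ,β̃})⁻ is forced whenever H remains defined up to that time; in particular H cannot remain finite on [t₀, b) if b > t₀ + b_{κ,β̃}. -/
/-!
Writing `m = n - 1` and `v(t) = f(t - t₀)` for the comparison function, the quantity
`u = H v - m v'` satisfies the linear differential inequality `u' ≤ -(H / m) u` as long as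
`v > 0`, and `u(t₀) ≤ 0`; a Gronwall-type argument keeps `u ≤ 0`, which is the comparison
`H ≤ m v' / v`. At the first zero `c` of `f` we have `f'(c) < 0` (a solution of `f'' = κ f`
vanishing to first order is identically zero), so `m v' / v → -∞`, which a function
differentiable at `t₀ + c` cannot follow.
-/

open Real Set Filter Topology

theorem IsPreconnected.pos_of_ne_zero {α δ : Type*} [TopologicalSpace α] [LinearOrder δ]
    [TopologicalSpace δ] [OrderClosedTopology δ] [Zero δ] {s : Set α} (hs : IsPreconnected s)
    {f : α → δ} (hf : ContinuousOn f s) (hne : ∀ x ∈ s, f x ≠ 0) {a : α} (ha : a ∈ s)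
    (hfa : 0 < f a) : ∀ x ∈ s, 0 < f x := by
  intro x hx
  by_contra! hle
  obtain ⟨y, hy, hy0⟩ := hs.intermediate_value hx ha hf ⟨hle, hfa.le⟩
  exact hne y hy hy0

section LinearDifferentialInequality

variable {u u' : ℝ → ℝ} {a b : ℝ}

theorem nonpos_of_deriv_right_le_const_mul_abs {K : ℝ} (hu : ContinuousOn u (Icc a b))
    (hu' : ∀ x ∈ Ico a b, HasDerivWithinAt u (u' x) (Ici x) x) (ha : u a ≤ 0)
    (bound : ∀ x ∈ Ico a b, u' x ≤ K * |u x|) : ∀ x ∈ Icc a b, u x ≤ 0 := by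
  set L := |K| + 1
  -- fence `u` by the barriers `ε exp (L (x - a))`, which grow strictly faster than `K |u|` allows
  have fence : ∀ ε > 0, ∀ x ∈ Icc a b, u x ≤ ε * exp (L * (x - a)) := by
    intro ε hε
    refine image_le_of_deriv_right_lt_deriv_boundary hu hu' (by simpa using ha.trans hε.le)
      (B := fun x => ε * exp (L * (x - a))) (B' := fun x => L * (ε * exp (L * (x - a))))
      (fun x => ?_) fun x hx hux => ?_
    · exact ((((hasDerivAt_id' x).sub_const a).const_mul L).exp.const_mul ε).congr_deriv
        (by ring)
    · have hB : 0 < ε * exp (L * (x - a)) := by positivity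
      calc u' x ≤ K * |u x| := bound x hx
        _ ≤ |K| * (ε * exp (L * (x - a))) := by
          rw [hux, abs_of_pos hB]; exact mul_le_mul_of_nonneg_right (le_abs_self K) hB.le
        _ < L * (ε * exp (L * (x - a))) := by gcongr; linarith
  intro x hx
  refine le_of_forall_pos_le_add fun δ hδ => ?_
  have hE : 0 < exp (L * (x - a)) := exp_pos _
  simpa [div_mul_cancel₀ δ hE.ne'] using fence (δ / exp (L * (x - a))) (by positivity) x hx

theorem nonpos_of_deriv_right_le_mul {g : ℝ → ℝ} (hg : ContinuousOn g (Icc a b))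
    (hu : ContinuousOn u (Icc a b))
    (hu' : ∀ x ∈ Ico a b, HasDerivWithinAt u (u' x) (Ici x) x) (ha : u a ≤ 0)
    (bound : ∀ x ∈ Ico a b, u' x ≤ g x * u x) : ∀ x ∈ Icc a b, u x ≤ 0 := by
  obtain ⟨M, hM⟩ := isCompact_Icc.exists_bound_of_continuousOn hg
  refine nonpos_of_deriv_right_le_const_mul_abs (K := M) hu hu' ha fun x hx => ?_
  calc u' x ≤ g x * u x := bound x hx
    _ ≤ |g x| * |u x| := by rw [← abs_mul]; exact le_abs_self _
    _ ≤ M * |u x| := by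
      gcongr; simpa using hM x (Ico_subset_Icc_self hx)

end LinearDifferentialInequality

section LinearSecondOrderODE

variable {κ c : ℝ} {f f' : ℝ → ℝ}

theorem eq_zero_of_eq_zero_of_deriv_eq_zero (hf : ∀ s, HasDerivAt f (f' s) s)
    (hf' : ∀ s, HasDerivAt f' (κ * f s) s) (hc : f c = 0) (hc' : f' c = 0) (s : ℝ) :
    f s = 0 := by
  let A : ℝ × ℝ →L[ℝ] ℝ × ℝ :=
    (ContinuousLinearMap.snd ℝ ℝ ℝ).prod (κ • ContinuousLinearMap.fst ℝ ℝ ℝ)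
  have hsol : (fun t => (f t, f' t)) = 0 :=
    ODE_solution_unique_univ (v := fun _ => A) (s := fun _ => univ) (t₀ := c)
      (fun _ => A.lipschitz.lipschitzOnWith)
      (fun t => ⟨by simpa [A] using (hf t).prodMk (hf' t), trivial⟩)
      (fun t => ⟨by simp, trivial⟩) (by simp [hc, hc'])
  exact congrArg Prod.fst (congrFun hsol s)

theorem deriv_neg_of_first_zero (hf : ∀ s, HasDerivAt f (f' s) s)
    (hf' : ∀ s, HasDerivAt f' (κ * f s) s) (hc : 0 < c) (hpos : ∀ s ∈ Ico 0 c, 0 < f s)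
    (hzero : f c = 0) : f' c < 0 := by
  have hmin : IsLocalMinOn f (Icc 0 c) c := by
    refine eventually_nhdsWithin_of_forall fun s hs => ?_
    rcases hs.2.eq_or_lt with rfl | hlt
    · rfl
    · exact hzero ▸ (hpos s ⟨hs.1, hlt⟩).le
  have hcone : 0 - c ∈ posTangentConeAt (Icc 0 c) c :=
    sub_mem_posTangentConeAt_of_segment_subset (by rw [segment_symm, segment_eq_Icc hc.le])
  have hle := hmin.hasFDerivWithinAt_nonneg (hf c).hasDerivWithinAt.hasFDerivWithinAt hcone
  rw [ContinuousLinearMap.toSpanSingleton_apply, smul_eq_mul] at hle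
  have hne : f' c ≠ 0 := fun h =>
    (hpos 0 ⟨le_rfl, hc⟩).ne' (eq_zero_of_eq_zero_of_deriv_eq_zero hf hf' hzero h 0)
  exact lt_of_le_of_ne (by nlinarith) hne

theorem tendsto_div_atBot_of_first_zero (hf : ∀ s, HasDerivAt f (f' s) s)
    (hf' : ∀ s, HasDerivAt f' (κ * f s) s) (hc : 0 < c) (hpos : ∀ s ∈ Ico 0 c, 0 < f s)
    (hzero : f c = 0) : Tendsto (fun s => f' s / f s) (𝓝[<] c) atBot := by
  have hf0 : Tendsto f (𝓝[<] c) (𝓝[>] 0) := by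
    refine tendsto_nhdsWithin_iff.2 ⟨?_, ?_⟩
    · exact hzero ▸ (hf c).continuousAt.tendsto.mono_left nhdsWithin_le_nhds
    · filter_upwards [Ioo_mem_nhdsLT hc] with s hs using hpos s ⟨hs.1.le, hs.2⟩
  simp only [div_eq_mul_inv]
  exact ((hf' c).continuousAt.tendsto.mono_left nhdsWithin_le_nhds).neg_mul_atTop
    (deriv_neg_of_first_zero hf hf' hc hpos hzero) (tendsto_inv_nhdsGT_zero.comp hf0)

end LinearSecondOrderODE

theorem tendsto_sub_const_nhdsLT (a c : ℝ) :
    Tendsto (fun t => t - a) (𝓝[<] (a + c)) (𝓝[<] c) := by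
  refine tendsto_nhdsWithin_iff.2 ⟨?_, ?_⟩
  · exact ((continuous_sub_right a).tendsto' _ _ (by ring)).mono_left nhdsWithin_le_nhds
  · filter_upwards [self_mem_nhdsWithin] with t (ht : t < a + c)
    simp only [mem_Iio]; linarith

section Riccati

variable {m κ t₀ b c : ℝ} {f f' H : ℝ → ℝ}

theorem riccati_comparison (hm : 0 < m) (hf : ∀ s, HasDerivAt f (f' s) s)
    (hf' : ∀ s, HasDerivAt f' (κ * f s) s) (hpos : ∀ s ∈ Ico 0 c, 0 < f s)
    (hH : ∀ t ∈ Ico t₀ b, DifferentiableAt ℝ H t)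
    (hric : ∀ t ∈ Ico t₀ b, deriv H t + H t ^ 2 / m ≤ m * κ) (h0 : H t₀ ≤ m * f' 0 / f 0) :
    ∀ t ∈ Ico t₀ (min b (t₀ + c)), H t ≤ m * f' (t - t₀) / f (t - t₀) := by
  rintro t₁ ⟨ht₀, ht₁⟩
  rw [lt_min_iff] at ht₁
  have hv : ∀ t ∈ Icc t₀ t₁, 0 < f (t - t₀) := fun t ht =>
    hpos _ ⟨by linarith [ht.1], by linarith [ht.2]⟩
  have hHt : ∀ t ∈ Icc t₀ t₁, HasDerivAt H (deriv H t) t := fun t ht =>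
    (hH t ⟨ht.1, ht.2.trans_lt ht₁.1⟩).hasDerivAt
  have hu : ∀ t ∈ Icc t₀ t₁, HasDerivAt (fun t => H t * f (t - t₀) - m * f' (t - t₀))
      (deriv H t * f (t - t₀) + H t * f' (t - t₀) - m * (κ * f (t - t₀))) t := fun t ht =>
    ((hHt t ht).mul ((hf _).comp_sub_const t t₀)).sub (((hf' _).comp_sub_const t t₀).const_mul m)
  have hu₀ : H t₀ * f (t₀ - t₀) - m * f' (t₀ - t₀) ≤ 0 := by
    rw [sub_self, sub_nonpos, ← le_div_iff₀ (hpos 0 ⟨le_rfl, by linarith⟩)]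
    exact h0
  have hbound : ∀ t ∈ Ico t₀ t₁,
      deriv H t * f (t - t₀) + H t * f' (t - t₀) - m * (κ * f (t - t₀)) ≤
        -H t / m * (H t * f (t - t₀) - m * f' (t - t₀)) := by
    intro t ht
    have hgap : 0 ≤ f (t - t₀) * (m * κ - (deriv H t + H t ^ 2 / m)) :=
      mul_nonneg (hv t (Ico_subset_Icc_self ht)).le
        (sub_nonneg.2 (hric t ⟨ht.1, ht.2.trans ht₁.1⟩))
    have hexpand : -H t / m * (H t * f (t - t₀) - m * f' (t - t₀)) -
        (deriv H t * f (t - t₀) + H t * f' (t - t₀) - m * (κ * f (t - t₀))) =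
        f (t - t₀) * (m * κ - (deriv H t + H t ^ 2 / m)) := by
      field_simp; ring
    linarith
  have hu₁ := nonpos_of_deriv_right_le_mul (g := fun t => -H t / m)
    (fun t ht => ((hHt t ht).continuousAt.continuousWithinAt.neg).div_const m)
    (fun t ht => (hu t ht).continuousAt.continuousWithinAt)
    (fun t ht => (hu t (Ico_subset_Icc_self ht)).hasDerivWithinAt) hu₀ hbound t₁ ⟨ht₀, le_rfl⟩
  rw [le_div_iff₀ (hv t₁ ⟨ht₀, le_rfl⟩)]
  linarith

theorem le_add_of_riccati (hm : 0 < m) (hf : ∀ s, HasDerivAt f (f' s) s)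
    (hf' : ∀ s, HasDerivAt f' (κ * f s) s) (hc : 0 < c) (hpos : ∀ s ∈ Ico 0 c, 0 < f s)
    (hzero : f c = 0) (hH : ∀ t ∈ Ico t₀ b, DifferentiableAt ℝ H t)
    (hric : ∀ t ∈ Ico t₀ b, deriv H t + H t ^ 2 / m ≤ m * κ) (h0 : H t₀ ≤ m * f' 0 / f 0) :
    b ≤ t₀ + c := by
  by_contra! hT
  have hHT : ContinuousAt H (t₀ + c) := (hH _ ⟨by linarith, hT⟩).continuousAt
  have hcmp : ∀ᶠ t in 𝓝[<] (t₀ + c), H t ≤ m * f' (t - t₀) / f (t - t₀) := by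
    filter_upwards [Ioo_mem_nhdsLT (by linarith : t₀ < t₀ + c)] with t ht
    exact riccati_comparison hm hf hf' hpos hH hric h0 t ⟨ht.1.le, lt_min (ht.2.trans hT) ht.2⟩
  have hbot : Tendsto (fun t => m * f' (t - t₀) / f (t - t₀)) (𝓝[<] (t₀ + c)) atBot := by
    simp only [mul_div_assoc]
    exact ((tendsto_div_atBot_of_first_zero hf hf' hc hpos hzero).comp
      (tendsto_sub_const_nhdsLT t₀ c)).const_mul_atBot hm
  exact not_tendsto_atBot_of_tendsto_nhds (hHT.tendsto.mono_left nhdsWithin_le_nhds)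
    (tendsto_atBot_mono' _ hcmp hbot)

end Riccati

theorem mean_curvature_blowup_general (n : ℕ) (hn : 2 ≤ n) (κ t₀ b betat : ℝ)
    (fc : ℝ → ℝ) (bc : ℝ) (hbc : 0 < bc)
    (hfc : ∀ s : ℝ, DifferentiableAt ℝ fc s ∧ DifferentiableAt ℝ (deriv fc) s ∧
      deriv (deriv fc) s = κ * fc s)
    (hfcne : ∀ s ∈ Set.Ico (0:ℝ) bc, fc s ≠ 0)
    (hfczero : fc bc = 0)
    (hinit : ((n : ℝ) - 1) * deriv fc 0 / fc 0 = betat)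
    (H : ℝ → ℝ)
    (hHdiff : ∀ t ∈ Set.Ico t₀ b, DifferentiableAt ℝ H t)
    (hHineq : ∀ t ∈ Set.Ico t₀ b,
      deriv H t + (H t) ^ 2 / ((n : ℝ) - 1) ≤ ((n : ℝ) - 1) * κ)
    (hH0 : H t₀ = betat) :
    (∀ t ∈ Set.Ico t₀ (min b (t₀ + bc)),
      H t ≤ ((n : ℝ) - 1) * deriv fc (t - t₀) / fc (t - t₀)) ∧
    b ≤ t₀ + bc := by
  have hm : (0 : ℝ) < n - 1 := by
    have : (2 : ℝ) ≤ n := by exact_mod_cast hn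
    linarith
  -- rescale by `fc 0` so that the comparison function is positive on `[0, bc)`
  have ha : fc 0 ≠ 0 := hfcne 0 ⟨le_rfl, hbc⟩
  have hf : ∀ s, HasDerivAt (fun s => fc 0 * fc s) (fc 0 * deriv fc s) s := fun s =>
    (hfc s).1.hasDerivAt.const_mul _
  have hf' : ∀ s, HasDerivAt (fun s => fc 0 * deriv fc s) (κ * (fc 0 * fc s)) s := fun s => by
    simpa only [(hfc s).2.2, mul_left_comm] using (hfc s).2.1.hasDerivAt.const_mul (fc 0)
  have hpos : ∀ s ∈ Ico 0 bc, 0 < fc 0 * fc s :=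
    isPreconnected_Ico.pos_of_ne_zero (fun s _ => (hf s).continuousAt.continuousWithinAt)
      (fun s hs => mul_ne_zero ha (hfcne s hs)) ⟨le_rfl, hbc⟩ (mul_self_pos.2 ha)
  have hratio : ∀ s, ((n : ℝ) - 1) * (fc 0 * deriv fc s) / (fc 0 * fc s) =
      ((n : ℝ) - 1) * deriv fc s / fc s := fun s => by
    rw [mul_left_comm, mul_div_mul_left _ _ ha]
  have h0 : H t₀ ≤ ((n : ℝ) - 1) * (fc 0 * deriv fc 0) / (fc 0 * fc 0) := by
    rw [hratio, hinit, hH0]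
  refine ⟨fun t ht => hratio (t - t₀) ▸ riccati_comparison hm hf hf' hpos hHdiff hHineq h0 t ht,
    le_add_of_riccati hm hf hf' hbc hpos (by simp [hfczero]) hHdiff hHineq h0⟩

/-- Mean curvature blow-up forces focal points: if `H` satisfies the Riccati (Raychaudhuri)
inequality `H' + H²/(n−1) ≤ (n−1)κ` with `H t₀ = β̃`, and `fc` is the comparison warping
function with `(n−1) fc'(0)/fc(0) = β̃` and first positive zero `bc`, then `H` is bounded by
the comparison mean curvature `H_{κ,β̃}(t−t₀) = (n−1) fc'(t−t₀)/fc(t−t₀)` and `H` cannot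
remain defined (finite and differentiable) past `t₀ + bc`, i.e. `b ≤ t₀ + bc`. -/
theorem mean_curvature_blowup (n : ℕ) (hn : 2 ≤ n) (κ t₀ b betat : ℝ) (hb : t₀ < b)
    (fc : ℝ → ℝ) (bc : ℝ) (hbc : 0 < bc)
    (hfc : ∀ s : ℝ, DifferentiableAt ℝ fc s ∧ DifferentiableAt ℝ (deriv fc) s ∧
      deriv (deriv fc) s = κ * fc s)
    (hfcne : ∀ s ∈ Set.Ico (0:ℝ) bc, fc s ≠ 0)
    (hfczero : fc bc = 0)
    (hinit : ((n : ℝ) - 1) * deriv fc 0 / fc 0 = betat)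
    (H : ℝ → ℝ)
    (hHdiff : ∀ t ∈ Set.Ico t₀ b, DifferentiableAt ℝ H t)
    (hHineq : ∀ t ∈ Set.Ico t₀ b,
      deriv H t + (H t) ^ 2 / ((n : ℝ) - 1) ≤ ((n : ℝ) - 1) * κ)
    (hH0 : H t₀ = betat) :
    (∀ t ∈ Set.Ico t₀ (min b (t₀ + bc)),
      H t ≤ ((n : ℝ) - 1) * deriv fc (t - t₀) / fc (t - t₀)) ∧
    b ≤ t₀ + bc :=
  mean_curvature_blowup_general n hn κ t₀ b betat fc bc hbc hfc hfcne hfczero hinit H hHdiff hHineq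
    hH0
end
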